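/- arXiv:1512.02670 — 3 statements merged into one kernel-verified Lean document; each statement's English description precedes it below -/
import Mathlib

section
/- There exists an absolute constant C > 0 such that for arbitrary finite sets A, B, C', D of real numbers, the number of solutions (a,b,c,d) ∈ A × B × C' × D to the equation a − b = cd is at most C·((|A||B||C'||D|)^(2/3) + |A||D| + |B||C'|). -/
open Finset
open scoped Classical

noncomputable section
namespace SzT

def rnk (s : Finset ℝ) (x : ℝ) : ℕ := (s.filter (· < x)).card

def idx (s : Finset ℝ) (t : ℕ) (x : ℝ) : ℕ := rnk s x / t

lemma rnk_mono (s : Finset ℝ) {x y : ℝ} (h : x ≤ y) : rnk s x ≤ rnk s y := by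
  apply card_le_card
  intro z hz
  simp only [mem_filter] at hz ⊢
  exact ⟨hz.1, lt_of_lt_of_le hz.2 h⟩

lemma rnk_lt_card {s : Finset ℝ} {x : ℝ} (hx : x ∈ s) : rnk s x < s.card := by
  apply card_lt_card
  refine ⟨filter_subset _ _, fun hsub => ?_⟩
  have := hsub hx
  simp at this

lemma rnk_strict {s : Finset ℝ} {x y : ℝ} (hx : x ∈ s) (h : x < y) : rnk s x < rnk s y := by
  apply card_lt_card
  constructor
  · intro z hz
    simp only [mem_filter] at hz ⊢
    exact ⟨hz.1, hz.2.trans h⟩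
  · intro hsub
    have hx2 : x ∈ s.filter (· < y) := by simp [hx, h]
    have := hsub hx2
    simp at this

lemma idx_mono (s : Finset ℝ) (t : ℕ) {x y : ℝ} (h : x ≤ y) : idx s t x ≤ idx s t y :=
  Nat.div_le_div_right (rnk_mono s h)

lemma idx_lt {s : Finset ℝ} {t r : ℕ} (ht : 1 ≤ t) (hc : s.card ≤ r * t) {x : ℝ}
    (hx : x ∈ s) : idx s t x < r := by
  have h1 : rnk s x < r * t := lt_of_lt_of_le (rnk_lt_card hx) hc
  exact Nat.div_lt_iff_lt_mul ht |>.2 h1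

lemma card_idx_fiber {s : Finset ℝ} {t : ℕ} (ht : 1 ≤ t) (i : ℕ) :
    (s.filter fun x => idx s t x = i).card ≤ t := by
  have h : (s.filter fun x => idx s t x = i).card ≤ (Finset.Ico (i*t) (i*t+t)).card := by
    apply card_le_card_of_injOn (fun x => rnk s x)
    · intro x hx
      simp only [mem_coe, mem_filter] at hx
      have hdiv : rnk s x / t = i := hx.2
      have h1 := Nat.div_add_mod (rnk s x) t
      have h2 := Nat.mod_lt (rnk s x) ht
      rw [hdiv] at h1
      have h3 : i * t = t * i := Nat.mul_comm _ _
      simp only [Finset.mem_coe, Finset.mem_Ico]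
      omega
    · intro x hx y hy hxy
      simp only [coe_filter, Set.mem_setOf_eq] at hx hy
      rcases lt_trichotomy x y with h' | h' | h'
      · exact absurd hxy (Nat.ne_of_lt (rnk_strict hx.1 h'))
      · exact h'
      · exact absurd hxy.symm (Nat.ne_of_lt (rnk_strict hy.1 h'))
  simpa using h

/-- If `F` factors through `h` on `s`, the image of `F` is no bigger than that of `h`. -/
lemma card_image_le_of_det {α β : Type*} [DecidableEq β] (s : Finset α) (F : α → β) (h : α → ℕ)
    (hdet : ∀ x ∈ s, ∀ y ∈ s, h x = h y → F x = F y) (N : ℕ) (hbd : ∀ x ∈ s, h x < N) :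
    (s.image F).card ≤ N := by
  have e1 : s.image F = (s.image (fun x => (F x, h x))).image Prod.fst := by
    rw [Finset.image_image]
    rfl
  have e2 : ((s.image (fun x => (F x, h x))).image Prod.snd).card
      = (s.image (fun x => (F x, h x))).card := by
    apply Finset.card_image_of_injOn
    intro p hp q hq hpq
    simp only [coe_image, Set.mem_image, mem_coe] at hp hq
    obtain ⟨x, hx, rfl⟩ := hp
    obtain ⟨y, hy, rfl⟩ := hq
    simp only at hpq
    have := hdet x hx y hy hpq
    simp [this, hpq]
  have e3 : (s.image (fun x => (F x, h x))).image Prod.snd = s.image h := by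
    rw [Finset.image_image]
    rfl
  calc (s.image F).card ≤ (s.image (fun x => (F x, h x))).card := by
        rw [e1]; exact Finset.card_image_le
    _ = (s.image h).card := by rw [← e2, e3]
    _ ≤ (Finset.range N).card := by
        apply card_le_card
        intro v hv
        simp only [mem_image] at hv
        obtain ⟨x, hx, rfl⟩ := hv
        simp [hbd x hx]
    _ = N := by simp

/-- staircase: image of a pair of (mono, mono-or-anti) ℕ-valued maps on a finite set of reals -/
lemma stair (s : Finset ℝ) (f g : ℝ → ℕ) (r : ℕ)
    (hf : ∀ x ∈ s, ∀ y ∈ s, x ≤ y → f x ≤ f y)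
    (hfr : ∀ x ∈ s, f x < r) (hgr : ∀ x ∈ s, g x < r)
    (hg : (∀ x ∈ s, ∀ y ∈ s, x ≤ y → g x ≤ g y) ∨ (∀ x ∈ s, ∀ y ∈ s, x ≤ y → g y ≤ g x)) :
    (s.image (fun x => (f x, g x))).card ≤ 2 * r := by
  rcases hg with hg | hg
  · apply card_image_le_of_det s _ (fun x => f x + g x) _ (2*r)
    · intro x hx
      have := hfr x hx; have := hgr x hx; omega
    · intro x hx y hy hxy
      rcases le_total x y with h | h
      · have h1 := hf x hx y hy h
        have h2 := hg x hx y hy h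
        have : f x = f y ∧ g x = g y := by omega
        simp [this.1, this.2]
      · have h1 := hf y hy x hx h
        have h2 := hg y hy x hx h
        have : f x = f y ∧ g x = g y := by omega
        simp [this.1, this.2]
  · apply card_image_le_of_det s _ (fun x => f x + (r - 1 - g x)) _ (2*r)
    · intro x hx
      have := hfr x hx; have := hgr x hx; omega
    · intro x hx y hy hxy
      rcases le_total x y with h | h
      · have h1 := hf x hx y hy h
        have h2 := hg x hx y hy h
        have h3 := hgr x hx; have h4 := hgr y hy
        have : f x = f y ∧ g x = g y := by omega
        simp [this.1, this.2]
      · have h1 := hf y hy x hx h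
        have h2 := hg y hy x hx h
        have h3 := hgr x hx; have h4 := hgr y hy
        have : f x = f y ∧ g x = g y := by omega
        simp [this.1, this.2]


def inc (l q : ℝ × ℝ) : Prop := l.1 - q.2 = q.1 * l.2

lemma line_unique {a d a' d' c b c' b' : ℝ} (hne : (c, b) ≠ (c', b'))
    (h1 : a - b = c * d) (h2 : a - b' = c' * d) (h3 : a' - b = c * d') (h4 : a' - b' = c' * d') :
    (a, d) = (a', d') := by
  have hcc : c ≠ c' := by
    rintro rfl
    apply hne
    have : b = b' := by linarith
    simp [this]
  have hd : d = d' := by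
    have : (c - c') * d = (c - c') * d' := by ring_nf; nlinarith [h1, h2, h3, h4]
    exact mul_left_cancel₀ (sub_ne_zero.2 hcc) this
  have ha : a = a' := by rw [hd] at h1; linarith
  simp [ha, hd]

lemma sum_card_filter_swap {α β : Type*} (s : Finset α) (t : Finset β) (p : α → β → Prop)
    [∀ x, DecidablePred (p x)] :
    ∑ x ∈ s, (t.filter (p x)).card = ∑ y ∈ t, (s.filter (fun x => p x y)).card := by
  simp only [Finset.card_filter]
  rw [Finset.sum_comm]

lemma pair_count (P L' : Finset (ℝ × ℝ)) :
    ∑ l ∈ L', ((P.filter (inc l)).card * (P.filter (inc l)).card - (P.filter (inc l)).card)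
      ≤ P.card * P.card - P.card := by
  have step1 : ∀ l, (P.filter (inc l)).card * (P.filter (inc l)).card - (P.filter (inc l)).card
      = (P.offDiag.filter (fun q => inc l q.1 ∧ inc l q.2)).card := by
    intro l
    rw [← Finset.offDiag_card]
    congr 1
    ext ⟨u, v⟩
    simp only [Finset.mem_offDiag, Finset.mem_filter]
    tauto
  simp only [step1]
  calc ∑ l ∈ L', (P.offDiag.filter (fun q => inc l q.1 ∧ inc l q.2)).card
      = ∑ q ∈ P.offDiag, (L'.filter (fun l => inc l q.1 ∧ inc l q.2)).card :=
        sum_card_filter_swap L' P.offDiag (fun l q => inc l q.1 ∧ inc l q.2)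
    _ ≤ ∑ _q ∈ P.offDiag, 1 := by
        apply Finset.sum_le_sum
        intro q hq
        apply Finset.card_le_one.2
        intro l1 h1 l2 h2
        simp only [Finset.mem_filter] at h1 h2
        simp only [Finset.mem_offDiag] at hq
        have hne : (q.1.1, q.1.2) ≠ (q.2.1, q.2.2) := by
          simpa using hq.2.2
        have hu := line_unique hne h1.2.1 h1.2.2 h2.2.1 h2.2.2
        have e1 : l1.1 = l2.1 := (Prod.ext_iff.1 hu).1
        have e2 : l1.2 = l2.2 := (Prod.ext_iff.1 hu).2
        exact Prod.ext e1 e2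
    _ = P.offDiag.card := by simp
    _ = P.card * P.card - P.card := by convert Finset.offDiag_card (s := P) using 2


lemma nat_le_mul_self (k : ℕ) : k ≤ k * k := by
  cases k with
  | zero => simp
  | succ n => exact Nat.le_mul_of_pos_left _ (Nat.succ_pos n)

lemma cellCS (P Lf : Finset (ℝ × ℝ)) :
    ((∑ l ∈ Lf, (P.filter (inc l)).card : ℕ) : ℝ)
      ≤ ((Lf.filter fun l => 1 ≤ (P.filter (inc l)).card).card : ℝ)
        + (P.card : ℝ) * Real.sqrt ((Lf.filter fun l => 1 ≤ (P.filter (inc l)).card).card) := by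
  set k : ℝ × ℝ → ℕ := fun l => (P.filter (inc l)).card with hk
  set L' : Finset (ℝ × ℝ) := Lf.filter (fun l => 1 ≤ k l) with hL'
  have hsub : ∑ l ∈ Lf, k l = ∑ l ∈ L', k l := by
    symm
    apply Finset.sum_subset (Finset.filter_subset _ _)
    intro x hx hnx
    simp only [hL', Finset.mem_filter, hx, true_and, not_le, Nat.lt_one_iff] at hnx
    exact hnx
  set S : ℝ := ∑ l ∈ L', ((k l : ℝ) - 1) with hS
  have hS0 : 0 ≤ S := by
    apply Finset.sum_nonneg
    intro l hl
    simp only [hL', Finset.mem_filter] at hl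
    have : (1 : ℝ) ≤ k l := by exact_mod_cast hl.2
    linarith
  have hpair : ∑ l ∈ L', ((k l : ℝ) * ((k l : ℝ) - 1)) ≤ (P.card : ℝ) * P.card := by
    have hnat := pair_count P L'
    have hcast : ((∑ l ∈ L', (k l * k l - k l) : ℕ) : ℝ)
        = ∑ l ∈ L', ((k l : ℝ) * ((k l : ℝ) - 1)) := by
      push_cast [Nat.cast_sum]
      apply Finset.sum_congr rfl
      intro l _
      have h1 : k l ≤ k l * k l := nat_le_mul_self (k l)
      push_cast [Nat.cast_sub h1]
      ring
    have h2 : ((∑ l ∈ L', (k l * k l - k l) : ℕ) : ℝ) ≤ ((P.card * P.card - P.card : ℕ) : ℝ) := by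
      exact_mod_cast hnat
    have h3 : ((P.card * P.card - P.card : ℕ) : ℝ) ≤ (P.card : ℝ) * P.card := by
      have : (P.card : ℕ) ≤ P.card * P.card := nat_le_mul_self _
      push_cast [Nat.cast_sub this]
      nlinarith [Nat.cast_nonneg (α := ℝ) P.card]
    linarith [hcast ▸ h2]
  have hsq : S ^ 2 ≤ (L'.card : ℝ) * ((P.card : ℝ) * P.card) := by
    have h1 : S ^ 2 ≤ (L'.card : ℝ) * ∑ l ∈ L', ((k l : ℝ) - 1) ^ 2 :=
      sq_sum_le_card_mul_sum_sq
    have h2 : ∑ l ∈ L', ((k l : ℝ) - 1) ^ 2 ≤ ∑ l ∈ L', ((k l : ℝ) * ((k l : ℝ) - 1)) := by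
      apply Finset.sum_le_sum
      intro l hl
      simp only [hL', Finset.mem_filter] at hl
      have : (1 : ℝ) ≤ k l := by exact_mod_cast hl.2
      nlinarith
    have hc : (0 : ℝ) ≤ L'.card := Nat.cast_nonneg _
    nlinarith
  have hSle : S ≤ (P.card : ℝ) * Real.sqrt L'.card := by
    have h1 : S = Real.sqrt (S ^ 2) := (Real.sqrt_sq hS0).symm
    rw [h1]
    have h2 : Real.sqrt (S ^ 2) ≤ Real.sqrt ((L'.card : ℝ) * ((P.card : ℝ) * P.card)) :=
      Real.sqrt_le_sqrt hsq
    calc Real.sqrt (S ^ 2) ≤ Real.sqrt ((L'.card : ℝ) * ((P.card : ℝ) * P.card)) := h2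
      _ = (P.card : ℝ) * Real.sqrt L'.card := by
          rw [mul_comm (L'.card : ℝ), Real.sqrt_mul (mul_nonneg (Nat.cast_nonneg _) (Nat.cast_nonneg _) : (0:ℝ) ≤ (P.card : ℝ) * P.card)]
          rw [show ((P.card : ℝ) * P.card) = (P.card : ℝ) ^ 2 by ring]
          rw [Real.sqrt_sq (Nat.cast_nonneg _ : (0:ℝ) ≤ (P.card : ℝ))]
  have hfin : (↑(∑ l ∈ L', k l) : ℝ) = (L'.card : ℝ) + S := by
    rw [hS, Finset.sum_sub_distrib, Finset.sum_const, nsmul_eq_mul, mul_one]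
    push_cast
    ring
  rw [hsub]
  rw [hfin]
  linarith

def Pij (C B : Finset ℝ) (sC sB : ℕ) (ij : ℕ × ℕ) : Finset (ℝ × ℝ) :=
  (C.filter (fun c => idx C sC c = ij.1)) ×ˢ (B.filter (fun b => idx B sB b = ij.2))

def kc (C B : Finset ℝ) (sC sB : ℕ) (ij : ℕ × ℕ) (l : ℝ × ℝ) : ℕ :=
  ((Pij C B sC sB ij).filter (inc l)).card

lemma M1 (C B : Finset ℝ) (sC sB r : ℕ) (hsC1 : 1 ≤ sC) (hsB1 : 1 ≤ sB)
    (hC : C.card ≤ r * sC) (hB : B.card ≤ r * sB) (l : ℝ × ℝ) :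
    ((C ×ˢ B).filter (inc l)).card
      = ∑ ij ∈ Finset.range r ×ˢ Finset.range r, kc C B sC sB ij l := by
  rw [Finset.card_eq_sum_card_fiberwise
    (f := fun q : ℝ × ℝ => (idx C sC q.1, idx B sB q.2))
    (t := Finset.range r ×ˢ Finset.range r) ?_]
  · apply Finset.sum_congr rfl
    intro ij _
    congr 1
    ext q
    simp only [Finset.mem_filter, Finset.mem_product, kc, Pij, Prod.ext_iff]
    tauto
  · intro q hq
    simp only [Finset.mem_coe, Finset.mem_filter, Finset.mem_product] at hq
    simp only [Finset.mem_coe, Finset.mem_product, Finset.mem_range]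
    exact ⟨idx_lt hsC1 hC hq.1.1, idx_lt hsB1 hB hq.1.2⟩

lemma M2 (C B : Finset ℝ) (sC sB r : ℕ) (hsC1 : 1 ≤ sC) (hsB1 : 1 ≤ sB)
    (hC : C.card ≤ r * sC) (hB : B.card ≤ r * sB) (l : ℝ × ℝ) :
    ((Finset.range r ×ˢ Finset.range r).filter
      (fun ij => 1 ≤ kc C B sC sB ij l)).card ≤ 2 * r := by
  have hsubset : ((Finset.range r ×ˢ Finset.range r).filter
      (fun ij => 1 ≤ kc C B sC sB ij l))
      ⊆ (C.filter (fun c => l.1 - c * l.2 ∈ B)).image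
          (fun c => (idx C sC c, idx B sB (l.1 - c * l.2))) := by
    intro ij hij
    simp only [Finset.mem_filter] at hij
    have hpos : 0 < ((Pij C B sC sB ij).filter (inc l)).card := hij.2
    obtain ⟨q, hq⟩ := Finset.card_pos.1 hpos
    simp only [Finset.mem_filter, Pij, Finset.mem_product] at hq
    obtain ⟨⟨⟨hc1, hc2⟩, hb1, hb2⟩, hinc⟩ := hq
    have hb : q.2 = l.1 - q.1 * l.2 := by
      have := hinc
      simp only [inc] at this
      linarith
    apply Finset.mem_image.2
    refine ⟨q.1, ?_, ?_⟩
    · simp only [Finset.mem_filter]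
      exact ⟨hc1, by rw [← hb]; exact hb1⟩
    · rw [← hb]
      rw [hc2, hb2]
  apply le_trans (Finset.card_le_card hsubset)
  apply stair
  · intro x _ y _ hxy
    exact idx_mono C sC hxy
  · intro x hx
    simp only [Finset.mem_filter] at hx
    exact idx_lt hsC1 hC hx.1
  · intro x hx
    simp only [Finset.mem_filter] at hx
    exact idx_lt hsB1 hB hx.2
  · rcases le_total l.2 0 with hd | hd
    · left
      intro x hx y hy hxy
      apply idx_mono
      nlinarith
    · right
      intro x hx y hy hxy
      apply idx_mono
      nlinarith

lemma main_cell (A B C D : Finset ℝ) (r sC sB : ℕ) (hr : 1 ≤ r) (hsC1 : 1 ≤ sC)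
    (hsB1 : 1 ≤ sB) (hC : C.card ≤ r * sC) (hB : B.card ≤ r * sB) :
    ((∑ l ∈ A ×ˢ D, ((C ×ˢ B).filter (inc l)).card : ℕ) : ℝ)
      ≤ 2*r*((A.card : ℝ)*D.card)
        + (sC : ℝ)*sB*r*Real.sqrt (2*r*((A.card : ℝ)*D.card)) := by
  set R := Finset.range r ×ˢ Finset.range r with hR
  set Lf := A ×ˢ D with hLf
  set lij : ℕ × ℕ → ℕ := fun ij => (Lf.filter fun l => 1 ≤ kc C B sC sB ij l).card with hlij
  have hcardR : R.card = r * r := by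
    rw [hR, Finset.card_product, Finset.card_range]
  have hcardLf : (Lf.card : ℝ) = (A.card : ℝ) * D.card := by
    rw [hLf, Finset.card_product]; push_cast; ring
  -- reorganize as sum over cells
  have hT : ∑ l ∈ Lf, ((C ×ˢ B).filter (inc l)).card
      = ∑ ij ∈ R, ∑ l ∈ Lf, kc C B sC sB ij l := by
    rw [Finset.sum_comm]
    apply Finset.sum_congr rfl
    intro l _
    exact M1 C B sC sB r hsC1 hsB1 hC hB l
  -- total lines over cells
  have hLsum : ∑ ij ∈ R, lij ij ≤ 2 * r * Lf.card := by
    have hswap := sum_card_filter_swap R Lf (fun ij l => 1 ≤ kc C B sC sB ij l)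
    calc ∑ ij ∈ R, lij ij = ∑ l ∈ Lf, (R.filter (fun ij => 1 ≤ kc C B sC sB ij l)).card :=
          hswap
      _ ≤ ∑ _l ∈ Lf, 2 * r := by
          apply Finset.sum_le_sum
          intro l _
          exact M2 C B sC sB r hsC1 hsB1 hC hB l
      _ = 2 * r * Lf.card := by rw [Finset.sum_const, smul_eq_mul]; ring
  -- cell sizes
  have hPsize : ∀ ij : ℕ × ℕ, ((Pij C B sC sB ij).card : ℝ) ≤ (sC : ℝ) * sB := by
    intro ij
    have : (Pij C B sC sB ij).card ≤ sC * sB := by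
      rw [Pij, Finset.card_product]
      exact Nat.mul_le_mul (card_idx_fiber hsC1 ij.1) (card_idx_fiber hsB1 ij.2)
    exact_mod_cast this
  -- per-cell CS
  have hcell : ∀ ij ∈ R, ((∑ l ∈ Lf, kc C B sC sB ij l : ℕ) : ℝ)
      ≤ (lij ij : ℝ) + (sC : ℝ) * sB * Real.sqrt (lij ij) := by
    intro ij _
    have h1 := cellCS (Pij C B sC sB ij) Lf
    have h2 : ((Pij C B sC sB ij).card : ℝ) * Real.sqrt (lij ij)
        ≤ (sC : ℝ) * sB * Real.sqrt (lij ij) := by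
      apply mul_le_mul_of_nonneg_right (hPsize ij) (Real.sqrt_nonneg _)
    calc ((∑ l ∈ Lf, kc C B sC sB ij l : ℕ) : ℝ)
        ≤ (lij ij : ℝ) + ((Pij C B sC sB ij).card : ℝ) * Real.sqrt (lij ij) := h1
      _ ≤ (lij ij : ℝ) + (sC : ℝ) * sB * Real.sqrt (lij ij) := by linarith
  -- sqrt-sum bound
  have hsqrtsum : ∑ ij ∈ R, Real.sqrt (lij ij)
      ≤ (r : ℝ) * Real.sqrt (2*r*((A.card : ℝ)*D.card)) := by
    have h1 : (∑ ij ∈ R, Real.sqrt (lij ij))^2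
        ≤ (R.card : ℝ) * ∑ ij ∈ R, (Real.sqrt (lij ij))^2 := sq_sum_le_card_mul_sum_sq
    have h2 : ∑ ij ∈ R, (Real.sqrt (lij ij))^2 = ∑ ij ∈ R, (lij ij : ℝ) := by
      apply Finset.sum_congr rfl
      intro ij _
      rw [Real.sq_sqrt (Nat.cast_nonneg _)]
    have h3 : ∑ ij ∈ R, (lij ij : ℝ) ≤ 2*r*((A.card : ℝ)*D.card) := by
      have := hLsum
      have hcast : ((∑ ij ∈ R, lij ij : ℕ) : ℝ) ≤ ((2 * r * Lf.card : ℕ) : ℝ) := by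
        exact_mod_cast this
      push_cast at hcast
      rw [hcardLf] at hcast
      push_cast
      linarith
    have h4 : (∑ ij ∈ R, Real.sqrt (lij ij))^2 ≤ (r:ℝ)^2 * (2*r*((A.card : ℝ)*D.card)) := by
      rw [h2] at h1
      have hRc : (R.card : ℝ) = (r : ℝ)^2 := by rw [hcardR]; push_cast; ring
      rw [hRc] at h1
      nlinarith [sq_nonneg ((r:ℝ)), Nat.cast_nonneg (α := ℝ) r]
    have h5 : 0 ≤ ∑ ij ∈ R, Real.sqrt (lij ij) :=
      Finset.sum_nonneg fun ij _ => Real.sqrt_nonneg _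
    calc ∑ ij ∈ R, Real.sqrt (lij ij)
        = Real.sqrt ((∑ ij ∈ R, Real.sqrt (lij ij))^2) := (Real.sqrt_sq h5).symm
      _ ≤ Real.sqrt ((r:ℝ)^2 * (2*r*((A.card : ℝ)*D.card))) := Real.sqrt_le_sqrt h4
      _ = (r : ℝ) * Real.sqrt (2*r*((A.card : ℝ)*D.card)) := by
          rw [Real.sqrt_mul (by positivity), Real.sqrt_sq (by positivity)]
  -- assemble
  have hTR : ((∑ l ∈ Lf, ((C ×ˢ B).filter (inc l)).card : ℕ) : ℝ)
      = ∑ ij ∈ R, ((∑ l ∈ Lf, kc C B sC sB ij l : ℕ) : ℝ) := by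
    rw [hT]; push_cast; ring
  rw [hTR]
  calc ∑ ij ∈ R, ((∑ l ∈ Lf, kc C B sC sB ij l : ℕ) : ℝ)
      ≤ ∑ ij ∈ R, ((lij ij : ℝ) + (sC : ℝ) * sB * Real.sqrt (lij ij)) :=
        Finset.sum_le_sum hcell
    _ = (∑ ij ∈ R, (lij ij : ℝ)) + (sC : ℝ) * sB * ∑ ij ∈ R, Real.sqrt (lij ij) := by
        rw [Finset.sum_add_distrib, Finset.mul_sum]
    _ ≤ 2*r*((A.card : ℝ)*D.card)
        + (sC : ℝ)*sB*r*Real.sqrt (2*r*((A.card : ℝ)*D.card)) := by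
        have h3 : ∑ ij ∈ R, (lij ij : ℝ) ≤ 2*r*((A.card : ℝ)*D.card) := by
          have hcast : ((∑ ij ∈ R, lij ij : ℕ) : ℝ) ≤ ((2 * r * Lf.card : ℕ) : ℝ) := by
            exact_mod_cast hLsum
          push_cast at hcast
          rw [hcardLf] at hcast
          push_cast
          linarith
        have h6 : (sC : ℝ) * sB * ∑ ij ∈ R, Real.sqrt (lij ij)
            ≤ (sC : ℝ) * sB * ((r : ℝ) * Real.sqrt (2*r*((A.card : ℝ)*D.card))) := by
          apply mul_le_mul_of_nonneg_left hsqrtsum (by positivity)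
        linarith [h6]


lemma bridge (A B C D : Finset ℝ) :
    (((A ×ˢ B ×ˢ C ×ˢ D).filter fun x => x.1 - x.2.1 = x.2.2.1 * x.2.2.2).card : ℕ)
      = ∑ l ∈ A ×ˢ D, ((C ×ˢ B).filter (inc l)).card := by
  rw [Finset.card_filter]
  have lhs : ∑ x ∈ A ×ˢ B ×ˢ C ×ˢ D,
      (if x.1 - x.2.1 = x.2.2.1 * x.2.2.2 then 1 else 0)
      = ∑ a ∈ A, ∑ b ∈ B, ∑ c ∈ C, ∑ d ∈ D, (if a - b = c * d then 1 else 0) := by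
    rw [Finset.sum_product]
    apply Finset.sum_congr rfl; intro a _
    rw [Finset.sum_product]
    apply Finset.sum_congr rfl; intro b _
    rw [Finset.sum_product]
  have rhs : ∑ l ∈ A ×ˢ D, ((C ×ˢ B).filter (inc l)).card
      = ∑ a ∈ A, ∑ d ∈ D, ∑ c ∈ C, ∑ b ∈ B, (if a - b = c * d then 1 else 0) := by
    rw [Finset.sum_product]
    apply Finset.sum_congr rfl; intro a _
    apply Finset.sum_congr rfl; intro d _
    rw [Finset.card_filter, Finset.sum_product]
    apply Finset.sum_congr rfl; intro c _
    apply Finset.sum_congr rfl; intro b _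
    simp only [inc]
    congr
  rw [lhs, rhs]
  apply Finset.sum_congr rfl; intro a _
  calc ∑ b ∈ B, ∑ c ∈ C, ∑ d ∈ D, (if a - b = c * d then 1 else 0)
      = ∑ c ∈ C, ∑ b ∈ B, ∑ d ∈ D, (if a - b = c * d then 1 else 0) := Finset.sum_comm
    _ = ∑ c ∈ C, ∑ d ∈ D, ∑ b ∈ B, (if a - b = c * d then 1 else 0) :=
        Finset.sum_congr rfl fun c _ => Finset.sum_comm
    _ = ∑ d ∈ D, ∑ c ∈ C, ∑ b ∈ B, (if a - b = c * d then 1 else 0) := Finset.sum_comm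

lemma triv1 (A B C D : Finset ℝ) :
    ((A ×ˢ B ×ˢ C ×ˢ D).filter fun x => x.1 - x.2.1 = x.2.2.1 * x.2.2.2).card
      ≤ A.card * C.card * D.card := by
  have h : ((A ×ˢ B ×ˢ C ×ˢ D).filter fun x => x.1 - x.2.1 = x.2.2.1 * x.2.2.2).card
      ≤ (A ×ˢ C ×ˢ D).card := by
    apply Finset.card_le_card_of_injOn (fun x => (x.1, x.2.2.1, x.2.2.2))
    · intro x hx
      simp only [Finset.mem_coe, Finset.mem_filter, Finset.mem_product] at hx ⊢
      tauto
    · intro x hx y hy hxy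
      simp only [coe_filter, Set.mem_setOf_eq, Finset.mem_product] at hx hy
      simp only [Prod.ext_iff] at hxy
      obtain ⟨e1, e2, e3⟩ := hxy
      have hb : x.2.1 = y.2.1 := by
        have h1 := hx.2; have h2 := hy.2
        rw [e2, e3] at h1
        rw [← e1] at h2
        linarith
      exact Prod.ext e1 (Prod.ext hb (Prod.ext e2 e3))
  calc _ ≤ (A ×ˢ C ×ˢ D).card := h
    _ = A.card * C.card * D.card := by
      rw [Finset.card_product, Finset.card_product]; ring

lemma triv2 (A B C D : Finset ℝ) :
    ((A ×ˢ B ×ˢ C ×ˢ D).filter fun x => x.1 - x.2.1 = x.2.2.1 * x.2.2.2).card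
      ≤ A.card * B.card * D.card + B.card * C.card := by
  set S := (A ×ˢ B ×ˢ C ×ˢ D).filter fun x => x.1 - x.2.1 = x.2.2.1 * x.2.2.2 with hS
  have hsplit : S.card = (S.filter fun x => x.2.2.2 ≠ 0).card
      + (S.filter fun x => ¬ x.2.2.2 ≠ 0).card :=
    (Finset.card_filter_add_card_filter_not _).symm
  have h1 : (S.filter fun x => x.2.2.2 ≠ 0).card ≤ (A ×ˢ B ×ˢ D).card := by
    apply Finset.card_le_card_of_injOn (fun x => (x.1, x.2.1, x.2.2.2))
    · intro x hx
      simp only [hS, Finset.mem_coe, Finset.mem_filter, Finset.mem_product] at hx ⊢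
      tauto
    · intro x hx y hy hxy
      simp only [hS, coe_filter, Finset.mem_filter, Set.mem_setOf_eq, Finset.mem_product] at hx hy
      simp only [Prod.ext_iff] at hxy
      obtain ⟨e1, e2, e3⟩ := hxy
      have hd : x.2.2.2 ≠ 0 := hx.2
      have hq1 := hx.1.2
      have hq2 := hy.1.2
      have hc : x.2.2.1 = y.2.2.1 := by
        have heq : x.2.2.1 * x.2.2.2 = y.2.2.1 * y.2.2.2 := by
          rw [← hq1, e1, e2, hq2]
        rw [← e3] at heq
        exact mul_right_cancel₀ hd heq
      exact Prod.ext e1 (Prod.ext e2 (Prod.ext hc e3))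
  have h2 : (S.filter fun x => ¬ x.2.2.2 ≠ 0).card ≤ (B ×ˢ C).card := by
    apply Finset.card_le_card_of_injOn (fun x => (x.2.1, x.2.2.1))
    · intro x hx
      simp only [hS, Finset.mem_coe, Finset.mem_filter, Finset.mem_product] at hx ⊢
      tauto
    · intro x hx y hy hxy
      simp only [hS, coe_filter, Finset.mem_filter, Set.mem_setOf_eq, Finset.mem_product] at hx hy
      simp only [Prod.ext_iff] at hxy
      obtain ⟨e2, e3⟩ := hxy
      have hdx : x.2.2.2 = 0 := by tauto
      have hdy : y.2.2.2 = 0 := by tauto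
      have hax : x.1 = x.2.1 := by
        have := hx.1.2; rw [hdx] at this; linarith [this]
      have hay : y.1 = y.2.1 := by
        have := hy.1.2; rw [hdy] at this; linarith [this]
      have e1 : x.1 = y.1 := by rw [hax, hay, e2]
      exact Prod.ext e1 (Prod.ext e2 (Prod.ext e3 (by rw [hdx, hdy])))
  calc S.card = _ + _ := hsplit
    _ ≤ (A ×ˢ B ×ˢ D).card + (B ×ˢ C).card := Nat.add_le_add h1 h2
    _ = A.card * B.card * D.card + B.card * C.card := by
        rw [Finset.card_product, Finset.card_product, Finset.card_product]; ring

lemma ceil_facts (m r : ℕ) (hr : 1 ≤ r) (hm : r ≤ m) :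
    1 ≤ (m + r - 1)/r ∧ m ≤ r * ((m + r - 1)/r) ∧ (((m + r - 1)/r : ℕ) : ℝ) ≤ 2*m/r := by
  have h1 := Nat.div_add_mod (m + r - 1) r
  have h2 := Nat.mod_lt (m + r - 1) (show 0 < r by omega)
  set q := (m + r - 1)/r with hq
  set t := (m + r - 1) % r with ht
  refine ⟨?_, ?_, ?_⟩
  · -- 1 ≤ q
    by_contra h
    push_neg at h
    interval_cases q
    omega
  · -- m ≤ r * q
    obtain ⟨P, hP⟩ : ∃ P, r * q = P := ⟨_, rfl⟩
    rw [hP] at h1 ⊢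
    omega
  · -- (q:ℝ) ≤ 2m/r
    have hn : q * r ≤ 2*m := by
      obtain ⟨P, hP⟩ : ∃ P, r * q = P := ⟨_, rfl⟩
      have hqr : q * r = P := by rw [← hP]; ring
      rw [hP] at h1
      rw [hqr]
      omega
    rw [le_div_iff₀ (by positivity : (0:ℝ) < (r:ℝ))]
    exact_mod_cast hn

lemma outer (A B C D : Finset ℝ) (r : ℕ) (hr : 1 ≤ r) (hrm : r ≤ C.card) (hrn : r ≤ B.card) :
    ((∑ l ∈ A ×ˢ D, ((C ×ˢ B).filter (inc l)).card : ℕ) : ℝ)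
      ≤ 2*r*((A.card : ℝ)*D.card)
        + 4*(C.card : ℝ)*(B.card : ℝ)*Real.sqrt (2*r*((A.card : ℝ)*D.card)) / r := by
  obtain ⟨hsC1, hC, hsCle⟩ := ceil_facts C.card r hr hrm
  obtain ⟨hsB1, hB, hsBle⟩ := ceil_facts B.card r hr hrn
  set sC := (C.card + r - 1)/r with hsC
  set sB := (B.card + r - 1)/r with hsB
  have hmain := main_cell A B C D r sC sB hr hsC1 hsB1 hC hB
  set u := Real.sqrt (2*r*((A.card : ℝ)*D.card)) with hu
  have hu0 : 0 ≤ u := Real.sqrt_nonneg _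
  have hr0 : (0:ℝ) < r := by positivity
  have hstep : (sC : ℝ)*sB*r*u ≤ 4*(C.card : ℝ)*(B.card : ℝ)*u / r := by
    have h1 : (sC : ℝ)*sB ≤ (2*(C.card:ℝ)/r) * (2*(B.card:ℝ)/r) := by
      apply mul_le_mul hsCle hsBle (by positivity) (by positivity)
    have h2 : (sC : ℝ)*sB*(r*u) ≤ (2*(C.card:ℝ)/r) * (2*(B.card:ℝ)/r) * (r*u) := by
      apply mul_le_mul_of_nonneg_right h1 (by positivity)
    calc (sC : ℝ)*sB*r*u = (sC : ℝ)*sB*(r*u) := by ring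
      _ ≤ (2*(C.card:ℝ)/r) * (2*(B.card:ℝ)/r) * (r*u) := h2
      _ = 4*(C.card : ℝ)*(B.card : ℝ)*u / r := by field_simp; ring
  linarith [hmain]

set_option maxHeartbeats 1000000 in
lemma numeric (m n k : ℕ) (hm : 1 ≤ m) (hn : 1 ≤ n) (hk : 1 ≤ k) (TT X : ℝ)
    (hX0 : 0 ≤ X) (hX3 : X^(3:ℕ) = ((k:ℝ))^2*((m:ℝ))^2*((n:ℝ))^2)
    (houter : ∀ r : ℕ, 1 ≤ r → r ≤ m → r ≤ n →
       TT ≤ 2*(r:ℝ)*(k:ℝ) + 4*(m:ℝ)*(n:ℝ)*Real.sqrt (2*(r:ℝ)*(k:ℝ))/(r:ℝ))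
    (htriv1 : TT ≤ (k:ℝ)*(m:ℝ))
    (htriv2 : TT ≤ (k:ℝ)*(n:ℝ) + (n:ℝ)*(m:ℝ)) :
    TT ≤ 10*(X + (k:ℝ) + (n:ℝ)*(m:ℝ)) := by
  have hmR : (1:ℝ) ≤ (m:ℝ) := by exact_mod_cast hm
  have hnR : (1:ℝ) ≤ (n:ℝ) := by exact_mod_cast hn
  have hkR : (1:ℝ) ≤ (k:ℝ) := by exact_mod_cast hk
  have hnm0 : (0:ℝ) ≤ (n:ℝ)*(m:ℝ) := by positivity
  by_cases hI : (m*n)^2 < k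
  · -- sparse case : r = 1
    have h := houter 1 le_rfl hm hn
    norm_num at h
    set a : ℝ := Real.sqrt (k:ℝ) with ha
    have ha0 : 0 ≤ a := Real.sqrt_nonneg _
    have haa : a * a = (k:ℝ) := Real.mul_self_sqrt (by positivity)
    have hmn : (m:ℝ) * (n:ℝ) ≤ a := by
      have h1 : ((m:ℝ)*(n:ℝ))^2 ≤ (k:ℝ) := by
        have : (((m*n)^2 : ℕ) : ℝ) ≤ ((k:ℕ):ℝ) := by exact_mod_cast le_of_lt hI
        push_cast at this
        nlinarith [this]
      calc (m:ℝ)*(n:ℝ) = Real.sqrt (((m:ℝ)*(n:ℝ))^2) := (Real.sqrt_sq (by positivity)).symm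
        _ ≤ a := Real.sqrt_le_sqrt h1
    have hsqrt2 : Real.sqrt 2 ≤ 1.5 := by
      rw [show (1.5:ℝ) = Real.sqrt (1.5^2) from (Real.sqrt_sq (by norm_num)).symm]
      apply Real.sqrt_le_sqrt; norm_num
    have hs20 : 0 ≤ Real.sqrt 2 := Real.sqrt_nonneg _
    have h1 : (m:ℝ)*(n:ℝ)*a ≤ a*a := mul_le_mul_of_nonneg_right hmn ha0
    have h3 : 4*((m:ℝ)*(n:ℝ)*a)*Real.sqrt 2 ≤ 4*(a*a)*(1.5) :=
      mul_le_mul (by linarith) hsqrt2 hs20 (by positivity)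
    have h4 : TT ≤ 8*(k:ℝ) := by
      have : 4*(m:ℝ)*(n:ℝ)*(Real.sqrt 2 * a) ≤ 6*(k:ℝ) := by
        calc 4*(m:ℝ)*(n:ℝ)*(Real.sqrt 2 * a) = 4*((m:ℝ)*(n:ℝ)*a)*Real.sqrt 2 := by ring
          _ ≤ 4*(a*a)*(1.5) := h3
          _ = 6*(k:ℝ) := by rw [haa]; ring
      linarith [h]
    linarith [hX0]
  · push_neg at hI
    by_cases hIII : k*m < n^2
    · have hc : (k:ℝ)*(m:ℝ) ≤ (n:ℝ)^2 := by
        have : ((k*m : ℕ):ℝ) ≤ ((n^2:ℕ):ℝ) := by exact_mod_cast le_of_lt hIII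
        push_cast at this; nlinarith [this]
      have hXle : (k:ℝ)*(m:ℝ) ≤ X := by
        apply le_of_pow_le_pow_left₀ (n := 3) (by norm_num) hX0
        have h5 := mul_le_mul_of_nonneg_left hc (sq_nonneg ((k:ℝ)*(m:ℝ)))
        calc ((k:ℝ)*(m:ℝ))^3 = ((k:ℝ)*(m:ℝ))^2*((k:ℝ)*(m:ℝ)) := by ring
          _ ≤ ((k:ℝ)*(m:ℝ))^2*(n:ℝ)^2 := h5
          _ = (k:ℝ)^2*(m:ℝ)^2*(n:ℝ)^2 := by ring
          _ = X^3 := hX3.symm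
      linarith [htriv1, hkR, hnm0]
    · push_neg at hIII
      by_cases hIV : k*n < m^2
      · have hc : (k:ℝ)*(n:ℝ) ≤ (m:ℝ)^2 := by
          have : ((k*n : ℕ):ℝ) ≤ ((m^2:ℕ):ℝ) := by exact_mod_cast le_of_lt hIV
          push_cast at this; nlinarith [this]
        have hXle : (k:ℝ)*(n:ℝ) ≤ X := by
          apply le_of_pow_le_pow_left₀ (n := 3) (by norm_num) hX0
          have h5 := mul_le_mul_of_nonneg_left hc (sq_nonneg ((k:ℝ)*(n:ℝ)))
          calc ((k:ℝ)*(n:ℝ))^3 = ((k:ℝ)*(n:ℝ))^2*((k:ℝ)*(n:ℝ)) := by ring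
            _ ≤ ((k:ℝ)*(n:ℝ))^2*(m:ℝ)^2 := h5
            _ = (k:ℝ)^2*(m:ℝ)^2*(n:ℝ)^2 := by ring
            _ = X^3 := hX3.symm
        linarith [htriv2, hkR, hnm0]
      · push_neg at hIV
        have hex : ∃ j, m^2*n^2 ≤ k*j^3 := by
          refine ⟨m*n, ?_⟩
          calc m^2*n^2 = (m*n)^2 := by ring
            _ ≤ (m*n)^2 * (m*n) := Nat.le_mul_of_pos_right _ (by positivity)
            _ = (m*n)^3 := by ring
            _ ≤ k * (m*n)^3 := Nat.le_mul_of_pos_left _ (by omega)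
        obtain ⟨r, hPr, hmin⟩ : ∃ r, (m^2*n^2 ≤ k*r^3) ∧ ∀ j < r, ¬(m^2*n^2 ≤ k*j^3) :=
          ⟨Nat.find hex, Nat.find_spec hex, fun j hj => Nat.find_min hex hj⟩
        have hr1 : 1 ≤ r := by
          rcases Nat.eq_zero_or_pos r with h | h
          · exfalso
            rw [h] at hPr
            simp at hPr
            have hpos : 0 < m^2*n^2 := by positivity
            omega
          · exact h
        have hrm : r ≤ m := by
          by_contra hcon
          push_neg at hcon
          apply hmin m hcon
          calc m^2*n^2 = n^2 * m^2 := by ring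
            _ ≤ (k*m) * m^2 := Nat.mul_le_mul_right _ hIII
            _ = k * m^3 := by ring
        have hrn : r ≤ n := by
          by_contra hcon
          push_neg at hcon
          apply hmin n hcon
          calc m^2*n^2 = (m^2) * n^2 := by ring
            _ ≤ (k*n) * n^2 := Nat.mul_le_mul_right _ hIV
            _ = k * n^3 := by ring
        have h := houter r hr1 hrm hrn
        set u : ℝ := Real.sqrt (2*(r:ℝ)*(k:ℝ)) with hu
        have hu0 : 0 ≤ u := Real.sqrt_nonneg _
        have hrR1 : (1:ℝ) ≤ (r:ℝ) := by exact_mod_cast hr1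
        have hu2 : u^2 = 2*(r:ℝ)*(k:ℝ) := Real.sq_sqrt (by positivity)
        have hPrR : (m:ℝ)^2*(n:ℝ)^2 ≤ (k:ℝ)*(r:ℝ)^3 := by
          have : ((m^2*n^2 : ℕ):ℝ) ≤ ((k*r^3 : ℕ):ℝ) := by exact_mod_cast hPr
          push_cast at this; nlinarith [this]
        have hb1R : 2*(r:ℝ)*(k:ℝ) ≤ 4*X := by
          apply le_of_pow_le_pow_left₀ (n := 3) (by norm_num) (by positivity)
          have h4X : (4*X)^3 = 64 * ((k:ℝ)^2*(m:ℝ)^2*(n:ℝ)^2) := by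
            rw [show (4*X)^3 = 64 * X^(3:ℕ) by ring, hX3]
          rcases Nat.lt_or_ge r 2 with h2 | h2
          · have hre : r = 1 := by omega
            rw [hre]
            have hkle : (k:ℝ) ≤ (m:ℝ)^2*(n:ℝ)^2 := by
              have : ((k:ℕ):ℝ) ≤ (((m*n)^2 : ℕ):ℝ) := by exact_mod_cast hI
              push_cast at this; nlinarith [this]
            rw [h4X]
            have hk2 : (0:ℝ) ≤ (k:ℝ)^2 := by positivity
            have h6 := mul_le_mul_of_nonneg_left hkle hk2
            have hy : (0:ℝ) ≤ (k:ℝ)^2*(m:ℝ)^2*(n:ℝ)^2 := by positivity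
            calc (2*((1:ℕ):ℝ)*(k:ℝ))^3 = 8*((k:ℝ)^2*(k:ℝ)) := by push_cast; ring
              _ ≤ 8*((k:ℝ)^2*((m:ℝ)^2*(n:ℝ)^2)) := by linarith [h6]
              _ = 8*((k:ℝ)^2*(m:ℝ)^2*(n:ℝ)^2)  := by ring
              _ ≤ 64*((k:ℝ)^2*(m:ℝ)^2*(n:ℝ)^2) := by linarith [hy]
          · have hmin' : ¬ (m^2*n^2 ≤ k*(r-1)^3) := hmin (r-1) (by omega)
            push_neg at hmin'
            have hminR : (k:ℝ)*((r:ℝ)-1)^3 ≤ (m:ℝ)^2*(n:ℝ)^2 := by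
              have h5 : ((k*(r-1)^3 : ℕ):ℝ) ≤ ((m^2*n^2 : ℕ):ℝ) := by
                exact_mod_cast le_of_lt hmin'
              push_cast [Nat.cast_sub (show 1 ≤ r by omega)] at h5
              nlinarith [h5]
            have hrR2 : (2:ℝ) ≤ (r:ℝ) := by exact_mod_cast h2
            have hcube : (r:ℝ)^3 ≤ (2*((r:ℝ)-1))^3 := by
              apply pow_le_pow_left₀ (by linarith) (by linarith)
            rw [h4X]
            calc (2*(r:ℝ)*(k:ℝ))^3 = 8*(r:ℝ)^3*(k:ℝ)^3 := by ring
              _ ≤ 8*(2*((r:ℝ)-1))^3*(k:ℝ)^3 := by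
                  have h7 := mul_le_mul_of_nonneg_right hcube
                    (show (0:ℝ) ≤ 8*(k:ℝ)^3 by positivity)
                  calc 8*(r:ℝ)^3*(k:ℝ)^3 = (r:ℝ)^3*(8*(k:ℝ)^3) := by ring
                    _ ≤ (2*((r:ℝ)-1))^3*(8*(k:ℝ)^3) := h7
                    _ = 8*(2*((r:ℝ)-1))^3*(k:ℝ)^3 := by ring
              _ = 64*(k:ℝ)^2*((k:ℝ)*((r:ℝ)-1)^3) := by ring
              _ ≤ 64*(k:ℝ)^2*((m:ℝ)^2*(n:ℝ)^2) := by
                  apply mul_le_mul_of_nonneg_left hminR (by positivity)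
              _ = 64 * ((k:ℝ)^2*(m:ℝ)^2*(n:ℝ)^2) := by ring
        have hb2R : 4*(m:ℝ)*(n:ℝ)*u/(r:ℝ) ≤ 6*X := by
          rw [div_le_iff₀ (by positivity : (0:ℝ) < (r:ℝ))]
          apply le_of_pow_le_pow_left₀ (n := 6) (by norm_num) (by positivity)
          have hLHS : (4*(m:ℝ)*(n:ℝ)*u)^6 = 4096*(m:ℝ)^6*(n:ℝ)^6*(u^2)^3 := by ring
          have hRHS : (6*X*(r:ℝ))^6 = 46656 * (X^(3:ℕ))^2 * (r:ℝ)^6 := by ring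
          rw [hLHS, hRHS, hu2, hX3]
          have key : (m:ℝ)^6*(n:ℝ)^6*((k:ℝ)^3*(r:ℝ)^3)
              ≤ (m:ℝ)^4*(n:ℝ)^4*(k:ℝ)^4*(r:ℝ)^6 := by
            calc (m:ℝ)^6*(n:ℝ)^6*((k:ℝ)^3*(r:ℝ)^3)
                = ((m:ℝ)^2*(n:ℝ)^2) * ((m:ℝ)^4*(n:ℝ)^4*(k:ℝ)^3*(r:ℝ)^3) := by ring
              _ ≤ ((k:ℝ)*(r:ℝ)^3) * ((m:ℝ)^4*(n:ℝ)^4*(k:ℝ)^3*(r:ℝ)^3) := by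
                  apply mul_le_mul_of_nonneg_right hPrR (by positivity)
              _ = (m:ℝ)^4*(n:ℝ)^4*(k:ℝ)^4*(r:ℝ)^6 := by ring
          have hpos : (0:ℝ) ≤ (m:ℝ)^4*(n:ℝ)^4*(k:ℝ)^4*(r:ℝ)^6 := by positivity
          calc 4096*(m:ℝ)^6*(n:ℝ)^6*(2*(r:ℝ)*(k:ℝ))^3
              = 32768 * ((m:ℝ)^6*(n:ℝ)^6*((k:ℝ)^3*(r:ℝ)^3)) := by ring
            _ ≤ 32768 * ((m:ℝ)^4*(n:ℝ)^4*(k:ℝ)^4*(r:ℝ)^6) := by linarith [key]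
            _ = 32768 * ((k:ℝ)^2*(m:ℝ)^2*(n:ℝ)^2)^2 * (r:ℝ)^6 := by ring
            _ ≤ 46656 * ((k:ℝ)^2*(m:ℝ)^2*(n:ℝ)^2)^2 * (r:ℝ)^6 := by
                have : (0:ℝ) ≤ ((k:ℝ)^2*(m:ℝ)^2*(n:ℝ)^2)^2 * (r:ℝ)^6 := by positivity
                nlinarith [this]
        linarith [h, hb1R, hb2R, hX0, hkR, hnm0]

end SzT
end

open SzT in
set_option maxHeartbeats 1000000 in
theorem stmt_5 :
    ∃ C : ℝ, 0 < C ∧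
      ∀ A B C' D : Finset ℝ,
        ((((A ×ˢ B ×ˢ C' ×ˢ D).filter fun x =>
            x.1 - x.2.1 = x.2.2.1 * x.2.2.2).card : ℝ)
          ≤ C * (((A.card : ℝ) * B.card * C'.card * D.card) ^ ((2 : ℝ) / 3)
              + (A.card : ℝ) * D.card + (B.card : ℝ) * C'.card)) := by
  refine ⟨100, by norm_num, ?_⟩
  intro A B C' D
  set T : ℕ := ((A ×ˢ B ×ˢ C' ×ˢ D).filter fun x =>
      x.1 - x.2.1 = x.2.2.1 * x.2.2.2).card with hT
  set X : ℝ := ((A.card : ℝ) * B.card * C'.card * D.card) ^ ((2 : ℝ) / 3) with hX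
  have hbase0 : (0:ℝ) ≤ (A.card : ℝ) * B.card * C'.card * D.card := by positivity
  have hX0 : 0 ≤ X := Real.rpow_nonneg hbase0 _
  have hX3 : X ^ (3:ℕ) = ((A.card : ℝ) * B.card * C'.card * D.card) ^ (2:ℕ) := by
    rw [hX, ← Real.rpow_natCast (((A.card : ℝ) * B.card * C'.card * D.card) ^ ((2:ℝ)/3)) 3,
      ← Real.rpow_mul hbase0]
    norm_num
  by_cases h0 : A.card = 0 ∨ B.card = 0 ∨ C'.card = 0 ∨ D.card = 0
  · have hTz : T = 0 := by
      rw [hT]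
      have hle : ((A ×ˢ B ×ˢ C' ×ˢ D).filter fun x =>
          x.1 - x.2.1 = x.2.2.1 * x.2.2.2).card ≤ (A ×ˢ B ×ˢ C' ×ˢ D).card :=
        Finset.card_le_card (Finset.filter_subset _ _)
      have hz : (A ×ˢ B ×ˢ C' ×ˢ D).card = 0 := by
        simp only [Finset.card_product]
        rcases h0 with h | h | h | h <;> simp [h]
      omega
    rw [hTz]
    push_cast
    have : (0:ℝ) ≤ X + (A.card : ℝ) * D.card + (B.card : ℝ) * C'.card := by positivity
    linarith
  · push_neg at h0
    obtain ⟨ha1, hb1, hc1, hd1⟩ := h0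
    have ha1' : 1 ≤ A.card := Nat.one_le_iff_ne_zero.2 ha1
    have hb1' : 1 ≤ B.card := Nat.one_le_iff_ne_zero.2 hb1
    have hc1' : 1 ≤ C'.card := Nat.one_le_iff_ne_zero.2 hc1
    have hd1' : 1 ≤ D.card := Nat.one_le_iff_ne_zero.2 hd1
    have hk1 : 1 ≤ A.card * D.card := Nat.one_le_iff_ne_zero.2 (by positivity)
    have hkcast : ((A.card * D.card : ℕ) : ℝ) = (A.card : ℝ) * D.card := by push_cast; ring
    have hmain := numeric C'.card B.card (A.card * D.card) hc1' hb1' hk1 (T:ℝ) X hX0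
      (by rw [hX3]; push_cast; ring)
      (by
        intro r hr hrm hrn
        have h := outer A B C' D r hr hrm hrn
        rw [← bridge A B C' D] at h
        rw [hkcast]
        exact_mod_cast h)
      (by
        have h := triv1 A B C' D
        have : ((A.card * C'.card * D.card : ℕ) : ℝ)
            = ((A.card * D.card : ℕ) : ℝ) * (C'.card : ℝ) := by push_cast; ring
        calc ((T:ℕ):ℝ) ≤ ((A.card * C'.card * D.card : ℕ) : ℝ) := by exact_mod_cast h
          _ = _ := this)
      (by
        have h := triv2 A B C' D
        have : ((A.card * B.card * D.card + B.card * C'.card : ℕ) : ℝ)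
            = ((A.card * D.card : ℕ) : ℝ) * (B.card : ℝ)
              + (B.card : ℝ) * (C'.card : ℝ) := by push_cast; ring
        calc ((T:ℕ):ℝ) ≤ ((A.card * B.card * D.card + B.card * C'.card : ℕ) : ℝ) := by
              exact_mod_cast h
          _ = _ := this)
    rw [hkcast] at hmain
    have hpos : (0:ℝ) ≤ X + (A.card : ℝ) * D.card + (B.card : ℝ) * C'.card := by positivity
    nlinarith [hmain, hpos, hX0]
end

section
/- There exists an absolute constant C > 0 such that for every finite set T ⊆ ℝ, the number of six-tuples (t₁,t₂,t₃,t₄,t₅,t₆) ∈ T⁶ satisfying t₁t₂ = t₃t₄ − t₅t₆ is at most C·|T|^(14/3). -/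
open Finset
open scoped Classical

set_option maxHeartbeats 2000000

/-- Two distinct points determine at most one line, for lines `c*d - e*f = x`, `x ≠ 0`.
Points are `(c,e)`, lines are `(d,f)`. -/
lemma two_pts {c e c' e' d f d' f' x : ℝ} (hx : x ≠ 0)
    (hne : (c, e) ≠ (c', e'))
    (h1 : c * d - e * f = x) (h2 : c' * d - e' * f = x)
    (h3 : c * d' - e * f' = x) (h4 : c' * d' - e' * f' = x) :
    d = d' ∧ f = f' := by
  by_cases hce : c * e' = c' * e
  · exfalso
    have hc : (c' - c) * x = 0 := by linear_combination c * h2 - c' * h1 + f * hce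
    have he : (e' - e) * x = 0 := by linear_combination e * h2 - e' * h1 + d * hce
    have hc' : c = c' := by
      rcases mul_eq_zero.1 hc with h | h
      · linarith
      · exact absurd h hx
    have he' : e = e' := by
      rcases mul_eq_zero.1 he with h | h
      · linarith
      · exact absurd h hx
    exact hne (by rw [hc', he'])
  · have hkey : c * e' - c' * e ≠ 0 := fun h => hce (by linarith)
    have hd : (d - d') * (c * e' - c' * e) = 0 := by
      linear_combination e' * h1 - e' * h3 - e * h2 + e * h4
    have hf : (f - f') * (c * e' - c' * e) = 0 := by
      linear_combination c' * h1 - c' * h3 - c * h2 + c * h4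
    constructor
    · rcases mul_eq_zero.1 hd with h | h
      · linarith
      · exact absurd h hkey
    · rcases mul_eq_zero.1 hf with h | h
      · linarith
      · exact absurd h hkey

noncomputable def rk (T : Finset ℝ) (t : ℝ) : ℕ := (T.filter (fun s => s < t)).card

lemma rk_mono (T : Finset ℝ) {a b : ℝ} (h : a ≤ b) : rk T a ≤ rk T b := by
  apply Finset.card_le_card
  intro s hs
  rw [Finset.mem_filter] at hs ⊢
  exact ⟨hs.1, lt_of_lt_of_le hs.2 h⟩

lemma rk_strictOn (T : Finset ℝ) {a b : ℝ} (ha : a ∈ T) (h : a < b) : rk T a < rk T b := by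
  apply Finset.card_lt_card
  constructor
  · intro s hs
    rw [Finset.mem_filter] at hs ⊢
    exact ⟨hs.1, lt_trans hs.2 h⟩
  · intro hsub
    have : a ∈ T.filter (fun s => s < b) := Finset.mem_filter.2 ⟨ha, h⟩
    have := hsub this
    rw [Finset.mem_filter] at this
    exact lt_irrefl a this.2

lemma rk_injOn (T : Finset ℝ) : Set.InjOn (rk T) T := by
  intro a ha b hb hab
  by_contra hne
  rcases lt_or_gt_of_ne hne with h | h
  · exact absurd hab (Nat.ne_of_lt (rk_strictOn T ha h))
  · exact absurd hab.symm (Nat.ne_of_lt (rk_strictOn T hb h))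

lemma rk_le (T : Finset ℝ) {t : ℝ} (ht : t ∈ T) : rk T t ≤ T.card - 1 := by
  have h1 : T.filter (fun s => s < t) ⊆ T.erase t := by
    intro s hs
    rw [Finset.mem_filter] at hs
    exact Finset.mem_erase.2 ⟨ne_of_lt hs.2, hs.1⟩
  have h2 := Finset.card_le_card h1
  rw [Finset.card_erase_of_mem ht] at h2
  exact h2

lemma iota_lt (T : Finset ℝ) (m : ℕ) {t : ℝ} (ht : t ∈ T) :
    rk T t / m < (T.card - 1) / m + 1 :=
  Nat.lt_succ_of_le (Nat.div_le_div_right (rk_le T ht))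

lemma blocksize (T : Finset ℝ) {m : ℕ} (hm : 0 < m) (i : ℕ) :
    (T.filter fun t => rk T t / m = i).card ≤ m := by
  calc (T.filter fun t => rk T t / m = i).card ≤ (Finset.Ico (i * m) (i * m + m)).card := by
        apply Finset.card_le_card_of_injOn (rk T)
        · intro t ht
          rw [Finset.mem_coe, Finset.mem_filter] at ht
          have h1 := Nat.div_add_mod (rk T t) m
          have h2 := Nat.mod_lt (rk T t) hm
          rw [ht.2] at h1
          have h3 : m * i = i * m := Nat.mul_comm m i
          rw [Finset.mem_coe, Finset.mem_Ico]
          omega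
        · exact (rk_injOn T).mono (by intro t ht; exact (Finset.mem_filter.1 ht).1)
    _ = m := by rw [Nat.card_Ico]; omega


/-- Monotone staircase: the image of a pair of (co)monotone ℕ-valued maps on a
finite linearly ordered set has at most `2r` elements. -/
lemma staircase (S : Finset ℝ) (u v : ℝ → ℕ) (r : ℕ)
    (hu : ∀ a ∈ S, u a < r) (hv : ∀ a ∈ S, v a < r)
    (humono : (∀ a ∈ S, ∀ b ∈ S, a ≤ b → u a ≤ u b) ∨ (∀ a ∈ S, ∀ b ∈ S, a ≤ b → u b ≤ u a))
    (hvmono : ∀ a ∈ S, ∀ b ∈ S, a ≤ b → v a ≤ v b) :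
    (S.image fun a => (u a, v a)).card ≤ 2 * r := by
  rcases humono with hm | hm
  · calc (S.image fun a => (u a, v a)).card ≤ (Finset.range (2 * r)).card := by
          apply Finset.card_le_card_of_injOn (fun q => q.1 + q.2)
          · intro q hq
            simp only [Finset.mem_coe, Finset.mem_image] at hq
            obtain ⟨a, ha, rfl⟩ := hq
            simp only [Finset.mem_coe, Finset.mem_range]
            have := hu a ha; have := hv a ha; omega
          · intro q1 hq1 q2 hq2 hsum
            simp only [Finset.coe_image, Set.mem_image, Finset.mem_coe] at hq1 hq2
            obtain ⟨a1, ha1, rfl⟩ := hq1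
            obtain ⟨a2, ha2, rfl⟩ := hq2
            rcases le_total a1 a2 with h | h
            · have h1 := hm a1 ha1 a2 ha2 h
              have h2 := hvmono a1 ha1 a2 ha2 h
              simp only [Prod.mk.injEq] at hsum ⊢
              omega
            · have h1 := hm a2 ha2 a1 ha1 h
              have h2 := hvmono a2 ha2 a1 ha1 h
              simp only [Prod.mk.injEq] at hsum ⊢
              omega
       _ = 2 * r := Finset.card_range _
  · calc (S.image fun a => (u a, v a)).card ≤ (Finset.range (2 * r)).card := by
          apply Finset.card_le_card_of_injOn (fun q => (r - 1 - q.1) + q.2)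
          · intro q hq
            simp only [Finset.mem_coe, Finset.mem_image] at hq
            obtain ⟨a, ha, rfl⟩ := hq
            simp only [Finset.mem_coe, Finset.mem_range]
            have := hu a ha; have := hv a ha; omega
          · intro q1 hq1 q2 hq2 hsum
            simp only [Finset.coe_image, Set.mem_image, Finset.mem_coe] at hq1 hq2
            obtain ⟨a1, ha1, rfl⟩ := hq1
            obtain ⟨a2, ha2, rfl⟩ := hq2
            have b1u := hu a1 ha1; have b2u := hu a2 ha2
            rcases le_total a1 a2 with h | h
            · have h1 := hm a1 ha1 a2 ha2 h
              have h2 := hvmono a1 ha1 a2 ha2 h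
              simp only [Prod.mk.injEq] at hsum ⊢
              omega
            · have h1 := hm a2 ha2 a1 ha1 h
              have h2 := hvmono a2 ha2 a1 ha1 h
              simp only [Prod.mk.injEq] at hsum ⊢
              omega
       _ = 2 * r := Finset.card_range _

/-- Double counting swap. -/
lemma swap_count {α β : Type*} (A : Finset α) (B : Finset β) (P : α → β → Prop)
    [∀ a b, Decidable (P a b)] :
    ∑ a ∈ A, (B.filter fun b => P a b).card = ∑ b ∈ B, (A.filter fun a => P a b).card := by
  simp only [Finset.card_filter]
  rw [Finset.sum_comm]

/-- Kővári–Sós–Turán-type incidence bound. -/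
lemma kst {α β : Type*} (A : Finset α) (B : Finset β) (Inc : α → β → Prop)
    (h2 : ∀ p ∈ A, ∀ q ∈ A, p ≠ q → (B.filter fun l => Inc p l ∧ Inc q l).card ≤ 1) :
    ((∑ l ∈ B, (A.filter fun p => Inc p l).card : ℕ) : ℝ)
      ≤ (A.card : ℝ) * Real.sqrt (B.card) + (B.card : ℝ) := by
  have sq_eq : ∀ l, (A.filter fun p => Inc p l).card * (A.filter fun p => Inc p l).card
      = (A.filter fun p => Inc p l).card + ((A.offDiag).filter
      (fun pq => Inc pq.1 l ∧ Inc pq.2 l)).card := by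
    intro l
    have hoff : (A.filter fun p => Inc p l).offDiag
        = (A.offDiag).filter (fun pq => Inc pq.1 l ∧ Inc pq.2 l) := by
      ext ⟨p, q⟩
      simp only [Finset.mem_offDiag, Finset.mem_filter]
      tauto
    have h := Finset.offDiag_card (A.filter fun p => Inc p l)
    rw [hoff] at h
    rcases Nat.eq_zero_or_pos ((A.filter fun p => Inc p l).card) with h0 | hpos
    · rw [h0] at h ⊢; simpa using h.symm
    · have hkk := Nat.le_mul_of_pos_left ((A.filter fun p => Inc p l).card) hpos
      omega
  have step1 : ∑ l ∈ B, (A.filter fun p => Inc p l).card * (A.filter fun p => Inc p l).card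
      ≤ (∑ l ∈ B, (A.filter fun p => Inc p l).card) + A.card * A.card := by
    have heq : ∑ l ∈ B, (A.filter fun p => Inc p l).card * (A.filter fun p => Inc p l).card
        = (∑ l ∈ B, (A.filter fun p => Inc p l).card) + ∑ l ∈ B, ((A.offDiag).filter
            (fun pq => Inc pq.1 l ∧ Inc pq.2 l)).card := by
      rw [← Finset.sum_add_distrib]
      exact Finset.sum_congr rfl fun l _ => sq_eq l
    rw [heq]
    have hswap : ∑ l ∈ B, ((A.offDiag).filter (fun pq => Inc pq.1 l ∧ Inc pq.2 l)).card
        = ∑ pq ∈ A.offDiag, (B.filter fun l => Inc pq.1 l ∧ Inc pq.2 l).card :=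
      (swap_count A.offDiag B _).symm
    have hbound : ∑ pq ∈ A.offDiag, (B.filter fun l => Inc pq.1 l ∧ Inc pq.2 l).card
        ≤ A.card * A.card := by
      calc ∑ pq ∈ A.offDiag, (B.filter fun l => Inc pq.1 l ∧ Inc pq.2 l).card
          ≤ ∑ _pq ∈ A.offDiag, 1 := by
            apply Finset.sum_le_sum
            intro pq hpq
            rw [Finset.mem_offDiag] at hpq
            exact h2 pq.1 hpq.1 pq.2 hpq.2.1 hpq.2.2
        _ = A.offDiag.card := by simp
        _ ≤ A.card * A.card := by rw [Finset.offDiag_card]; omega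
    omega
  have step2 : ((∑ l ∈ B, (A.filter fun p => Inc p l).card : ℕ) : ℝ) ^ 2
      ≤ (B.card : ℝ) * ∑ l ∈ B, (((A.filter fun p => Inc p l).card : ℝ)) ^ 2 := by
    have h := Finset.sum_mul_sq_le_sq_mul_sq B (fun _ => (1 : ℝ))
      (fun l => ((A.filter fun p => Inc p l).card : ℝ))
    push_cast
    simpa using h
  set I : ℝ := ((∑ l ∈ B, (A.filter fun p => Inc p l).card : ℕ) : ℝ) with hI
  have hInn : (0:ℝ) ≤ I := by positivity
  have hsum_sq : (∑ l ∈ B, (((A.filter fun p => Inc p l).card : ℝ)) ^ 2)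
      ≤ (A.card : ℝ) * A.card + I := by
    have hc : ((∑ l ∈ B, (A.filter fun p => Inc p l).card
          * (A.filter fun p => Inc p l).card : ℕ) : ℝ)
        ≤ I + (A.card : ℝ) * A.card := by
      rw [hI]; exact_mod_cast step1
    calc (∑ l ∈ B, (((A.filter fun p => Inc p l).card : ℝ)) ^ 2)
        = ((∑ l ∈ B, (A.filter fun p => Inc p l).card
            * (A.filter fun p => Inc p l).card : ℕ) : ℝ) := by
          push_cast; apply Finset.sum_congr rfl; intros; ring
      _ ≤ (A.card : ℝ) * A.card + I := by linarith
  have key : I ^ 2 ≤ (B.card : ℝ) * ((A.card : ℝ) * A.card + I) :=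
    step2.trans (mul_le_mul_of_nonneg_left hsum_sq (by positivity))
  set AR : ℝ := (A.card : ℝ) with hAR
  set s : ℝ := Real.sqrt (B.card) with hs
  have hs0 : 0 ≤ s := Real.sqrt_nonneg _
  have hs2 : s ^ 2 = (B.card : ℝ) := Real.sq_sqrt (by positivity)
  have hA0 : 0 ≤ AR := by positivity
  by_contra hcon
  push_neg at hcon
  rw [← hs2] at key hcon
  have hI0 : 0 < I := lt_of_le_of_lt (by positivity : (0:ℝ) ≤ AR * s + s ^ 2) hcon
  have h3 : (AR * s + s ^ 2) * I < I * I := mul_lt_mul_of_pos_right hcon hI0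
  have h4 : AR * s ≤ I := le_of_lt (lt_of_le_of_lt (le_add_of_nonneg_right (sq_nonneg s)) hcon)
  have h5 : AR * s * (AR * s) ≤ AR * s * I := mul_le_mul_of_nonneg_left h4 (mul_nonneg hA0 hs0)
  nlinarith [h3, h5, key]

/-- Each line `p.1 * d - p.2 * f = x` touches at most `2r` cells. -/
lemma cells_per_line (T : Finset ℝ) {m : ℕ} (hm : 0 < m) (x d f : ℝ) (hx : x ≠ 0) :
    (((T ×ˢ T).filter fun p => p.1 * d - p.2 * f = x).image
        fun p => (rk T p.1 / m, rk T p.2 / m)).card ≤ 2 * ((T.card - 1) / m + 1) := by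
  set r := (T.card - 1) / m + 1 with hr
  by_cases hd : d = 0
  · by_cases hf : f = 0
    · have hempty : ((T ×ˢ T).filter fun p => p.1 * d - p.2 * f = x) = ∅ := by
        ext p
        simp only [Finset.mem_filter, Finset.notMem_empty, iff_false, not_and, hd, hf]
        intro _
        rw [mul_zero, mul_zero, sub_zero]
        exact fun h => hx h.symm
      rw [hempty]
      simp
    · -- d = 0, f ≠ 0 : second coordinate of incident points is fixed
      calc (((T ×ˢ T).filter fun p => p.1 * d - p.2 * f = x).image
            fun p => (rk T p.1 / m, rk T p.2 / m)).card
          ≤ (Finset.range r).card := by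
            apply Finset.card_le_card_of_injOn (fun q => q.1)
            · intro q hq
              simp only [Finset.mem_coe, Finset.mem_image] at hq
              obtain ⟨p, hp, rfl⟩ := hq
              rw [Finset.mem_filter, Finset.mem_product] at hp
              exact Finset.mem_range.2 (iota_lt T m hp.1.1)
            · intro q1 hq1 q2 hq2 hfst
              simp only [Finset.coe_image, Set.mem_image, Finset.mem_coe] at hq1 hq2
              obtain ⟨p1, hp1, rfl⟩ := hq1
              obtain ⟨p2, hp2, rfl⟩ := hq2
              rw [Finset.mem_filter] at hp1 hp2
              have e1 : p1.2 = -(x / f) := by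
                have := hp1.2; rw [hd, mul_zero, zero_sub] at this
                field_simp at this ⊢
                linarith
              have e2 : p2.2 = -(x / f) := by
                have := hp2.2; rw [hd, mul_zero, zero_sub] at this
                field_simp at this ⊢
                linarith
              have : p1.2 = p2.2 := by rw [e1, e2]
              exact Prod.ext hfst (by rw [this])
        _ = r := Finset.card_range r
        _ ≤ 2 * r := by omega
  · -- d ≠ 0 : incident points satisfy p.1 = (x + p.2 * f) / d
    have hsub : (((T ×ˢ T).filter fun p => p.1 * d - p.2 * f = x).image
            fun p => (rk T p.1 / m, rk T p.2 / m))
        ⊆ ((T.filter fun e => (x + e * f) / d ∈ T).image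
            fun e => (rk T ((x + e * f) / d) / m, rk T e / m)) := by
      intro q hq
      simp only [Finset.mem_image] at hq ⊢
      obtain ⟨p, hp, rfl⟩ := hq
      rw [Finset.mem_filter, Finset.mem_product] at hp
      have hp1 : p.1 = (x + p.2 * f) / d := by
        field_simp
        linarith [hp.2]
      refine ⟨p.2, Finset.mem_filter.2 ⟨hp.1.2, by rw [← hp1]; exact hp.1.1⟩, ?_⟩
      rw [← hp1]
    apply le_trans (Finset.card_le_card hsub)
    apply staircase
    · intro a ha
      rw [Finset.mem_filter] at ha
      exact iota_lt T m ha.2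
    · intro a ha
      rw [Finset.mem_filter] at ha
      exact iota_lt T m ha.1
    · -- monotone or antitone according to sign of f / d
      rcases le_total 0 (f / d) with hs | hs
      · left
        intro a _ b _ hab
        apply Nat.div_le_div_right
        apply rk_mono
        have : (x + a * f) / d = x / d + a * (f / d) := by ring
        have h2 : (x + b * f) / d = x / d + b * (f / d) := by ring
        rw [this, h2]
        have := mul_le_mul_of_nonneg_right hab hs
        linarith
      · right
        intro a _ b _ hab
        apply Nat.div_le_div_right
        apply rk_mono
        have h1 : (x + a * f) / d = x / d + a * (f / d) := by ring
        have h2 : (x + b * f) / d = x / d + b * (f / d) := by ring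
        rw [h1, h2]
        have := mul_le_mul_of_nonneg_right hab (neg_nonneg.2 hs)
        nlinarith
    · intro a _ b _ hab
      exact Nat.div_le_div_right (rk_mono T hab)

/-- Main incidence bound for the level set of `c*d - e*f = x`, `x ≠ 0`. -/
lemma S4_bound (T : Finset ℝ) {m : ℕ} (hm : 0 < m) {x : ℝ} (hx : x ≠ 0) :
    (((T ×ˢ T ×ˢ T ×ˢ T).filter
        fun q => q.1 * q.2.1 - q.2.2.1 * q.2.2.2 = x).card : ℝ)
      ≤ (m : ℝ) ^ 2 * (((T.card - 1) / m + 1 : ℕ) : ℝ) * T.card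
          * Real.sqrt (2 * (((T.card - 1) / m + 1 : ℕ) : ℝ))
        + 2 * (((T.card - 1) / m + 1 : ℕ) : ℝ) * (T.card : ℝ) ^ 2 := by
  set n := T.card with hn
  set r := (T.card - 1) / m + 1 with hr
  set S4 := (T ×ˢ T ×ˢ T ×ˢ T).filter
      (fun q : ℝ × ℝ × ℝ × ℝ => q.1 * q.2.1 - q.2.2.1 * q.2.2.2 = x) with hS4
  set key : ℝ × ℝ × ℝ × ℝ → ℕ × ℕ := fun q => (rk T q.1 / m, rk T q.2.2.1 / m) with hkey
  set R : Finset (ℕ × ℕ) := Finset.range r ×ˢ Finset.range r with hR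
  set A : ℕ × ℕ → Finset (ℝ × ℝ) := fun c =>
      (T.filter fun t => rk T t / m = c.1) ×ˢ (T.filter fun t => rk T t / m = c.2) with hA
  set Inc : ℝ × ℝ → ℝ × ℝ → Prop := fun p l => p.1 * l.1 - p.2 * l.2 = x with hInc
  set B : ℕ × ℕ → Finset (ℝ × ℝ) := fun c =>
      (T ×ˢ T).filter fun l => ∃ p ∈ A c, Inc p l with hB
  -- membership helper
  have memS4 : ∀ q ∈ S4, q.1 ∈ T ∧ q.2.1 ∈ T ∧ q.2.2.1 ∈ T ∧ q.2.2.2 ∈ T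
      ∧ q.1 * q.2.1 - q.2.2.1 * q.2.2.2 = x := by
    intro q hq
    rw [hS4, Finset.mem_filter, Finset.mem_product, Finset.mem_product,
      Finset.mem_product] at hq
    exact ⟨hq.1.1, hq.1.2.1, hq.1.2.2.1, hq.1.2.2.2, hq.2⟩
  -- Step 1: fiber over cells
  have step1 : S4.card = ∑ c ∈ R, (S4.filter fun q => key q = c).card := by
    apply Finset.card_eq_sum_card_fiberwise
    intro q hq
    obtain ⟨h1, _, h3, _, _⟩ := memS4 q hq
    rw [hR, Finset.mem_coe, Finset.mem_product]
    exact ⟨Finset.mem_range.2 (iota_lt T m h1), Finset.mem_range.2 (iota_lt T m h3)⟩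
  -- Step 2: per cell, write as a sum over incident lines
  have step2 : ∀ c ∈ R, (S4.filter fun q => key q = c).card
      = ∑ l ∈ B c, ((A c).filter fun p => Inc p l).card := by
    intro c _
    have hfib : (S4.filter fun q => key q = c).card
        = ∑ l ∈ B c, ((S4.filter fun q => key q = c).filter
            fun q => (q.2.1, q.2.2.2) = l).card := by
      apply Finset.card_eq_sum_card_fiberwise
      intro q hq
      rw [Finset.mem_coe, Finset.mem_filter] at hq
      obtain ⟨h1, h2, h3, h4, h5⟩ := memS4 q hq.1
      have hkq : rk T q.1 / m = c.1 ∧ rk T q.2.2.1 / m = c.2 := by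
        have := hq.2
        rw [hkey] at this
        exact ⟨(Prod.ext_iff.1 this).1, (Prod.ext_iff.1 this).2⟩
      rw [hB, Finset.mem_coe, Finset.mem_filter, Finset.mem_product]
      refine ⟨⟨h2, h4⟩, ⟨(q.1, q.2.2.1), ?_, ?_⟩⟩
      · rw [hA, Finset.mem_product, Finset.mem_filter, Finset.mem_filter]
        exact ⟨⟨h1, hkq.1⟩, ⟨h3, hkq.2⟩⟩
      · rw [hInc]; exact h5
    rw [hfib]
    apply Finset.sum_congr rfl
    intro l hl
    have hlT : l.1 ∈ T ∧ l.2 ∈ T := by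
      rw [hB, Finset.mem_filter, Finset.mem_product] at hl
      exact hl.1
    apply Finset.card_bij (fun q _ => (q.1, q.2.2.1))
    · intro q hq
      rw [Finset.mem_filter, Finset.mem_filter] at hq
      obtain ⟨⟨hqS, hqk⟩, hql⟩ := hq
      obtain ⟨h1, h2, h3, h4, h5⟩ := memS4 q hqS
      have hkq : rk T q.1 / m = c.1 ∧ rk T q.2.2.1 / m = c.2 := by
        rw [hkey] at hqk
        exact ⟨(Prod.ext_iff.1 hqk).1, (Prod.ext_iff.1 hqk).2⟩
      have hl1 : q.2.1 = l.1 := (Prod.ext_iff.1 hql).1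
      have hl2 : q.2.2.2 = l.2 := (Prod.ext_iff.1 hql).2
      rw [Finset.mem_filter, hA, Finset.mem_product, Finset.mem_filter, Finset.mem_filter]
      refine ⟨⟨⟨h1, hkq.1⟩, ⟨h3, hkq.2⟩⟩, ?_⟩
      rw [hInc]
      dsimp only
      rw [← hl1, ← hl2]
      exact h5
    · intro q hq q' hq' heq
      rw [Finset.mem_filter] at hq hq'
      have hl : q.2.1 = l.1 ∧ q.2.2.2 = l.2 :=
        ⟨(Prod.ext_iff.1 hq.2).1, (Prod.ext_iff.1 hq.2).2⟩
      have hl' : q'.2.1 = l.1 ∧ q'.2.2.2 = l.2 :=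
        ⟨(Prod.ext_iff.1 hq'.2).1, (Prod.ext_iff.1 hq'.2).2⟩
      have e1 : q.1 = q'.1 := (Prod.ext_iff.1 heq).1
      have e2 : q.2.2.1 = q'.2.2.1 := (Prod.ext_iff.1 heq).2
      ext
      · exact e1
      · rw [hl.1, hl'.1]
      · exact e2
      · rw [hl.2, hl'.2]
    · intro p hp
      rw [Finset.mem_filter, hA, Finset.mem_product, Finset.mem_filter,
        Finset.mem_filter] at hp
      obtain ⟨⟨⟨hp1T, hp1k⟩, ⟨hp2T, hp2k⟩⟩, hpI⟩ := hp
      refine ⟨(p.1, (l.1, (p.2, l.2))), ?_, rfl⟩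
      rw [Finset.mem_filter, Finset.mem_filter]
      refine ⟨⟨?_, ?_⟩, rfl⟩
      · rw [hS4, Finset.mem_filter, Finset.mem_product, Finset.mem_product,
          Finset.mem_product]
        refine ⟨⟨hp1T, hlT.1, hp2T, hlT.2⟩, ?_⟩
        rw [hInc] at hpI
        exact hpI
      · rw [hkey]
        dsimp only
        rw [hp1k, hp2k]
  -- Step 3: KST per cell
  have hAcard : ∀ c : ℕ × ℕ, ((A c).card : ℝ) ≤ (m : ℝ) ^ 2 := by
    intro c
    rw [hA]
    dsimp only
    rw [Finset.card_product]
    have b1 := blocksize T hm c.1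
    have b2 := blocksize T hm c.2
    have hmm : (T.filter fun t => rk T t / m = c.1).card
        * (T.filter fun t => rk T t / m = c.2).card ≤ m * m :=
      Nat.mul_le_mul b1 b2
    calc (((T.filter fun t => rk T t / m = c.1).card
        * (T.filter fun t => rk T t / m = c.2).card : ℕ) : ℝ)
        ≤ ((m * m : ℕ) : ℝ) := by exact_mod_cast hmm
      _ = (m : ℝ) ^ 2 := by push_cast; ring
  have step3 : ∀ c ∈ R, ((S4.filter fun q => key q = c).card : ℝ)
      ≤ (m : ℝ) ^ 2 * Real.sqrt ((B c).card) + ((B c).card : ℝ) := by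
    intro c hc
    rw [step2 c hc]
    have hkst := kst (A c) (B c) Inc ?twopts
    case twopts =>
      intro p hp q hq hne
      rw [Finset.card_le_one]
      intro l1 hl1 l2 hl2
      rw [Finset.mem_filter] at hl1 hl2
      have h12 := two_pts hx (by
        rw [hA, Finset.mem_product] at hp hq
        exact (Prod.ext_iff.not.2 (by
          intro hcon
          exact hne (Prod.ext hcon.1 hcon.2))) : (p.1, p.2) ≠ (q.1, q.2))
        hl1.2.1 hl1.2.2 hl2.2.1 hl2.2.2
      exact Prod.ext h12.1 h12.2
    calc ((∑ l ∈ B c, ((A c).filter fun p => Inc p l).card : ℕ) : ℝ)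
        ≤ ((A c).card : ℝ) * Real.sqrt ((B c).card) + ((B c).card : ℝ) := hkst
      _ ≤ (m : ℝ) ^ 2 * Real.sqrt ((B c).card) + ((B c).card : ℝ) := by
          have := hAcard c
          have h0 : (0:ℝ) ≤ Real.sqrt ((B c).card) := Real.sqrt_nonneg _
          nlinarith
  -- Step 4: total number of (cell, line) incidences
  have step4 : ∑ c ∈ R, ((B c).card) ≤ 2 * r * n ^ 2 := by
    have hswap : ∑ c ∈ R, ((B c).card)
        = ∑ l ∈ T ×ˢ T, (R.filter fun c => ∃ p ∈ A c, Inc p l).card := by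
      rw [hB]
      exact swap_count R (T ×ˢ T) (fun c l => ∃ p ∈ A c, Inc p l)
    rw [hswap]
    have hline : ∀ l ∈ T ×ˢ T, (R.filter fun c => ∃ p ∈ A c, Inc p l).card ≤ 2 * r := by
      intro l _
      have hsub : (R.filter fun c => ∃ p ∈ A c, Inc p l)
          ⊆ ((T ×ˢ T).filter fun p => p.1 * l.1 - p.2 * l.2 = x).image
              (fun p => (rk T p.1 / m, rk T p.2 / m)) := by
        intro c hc
        rw [Finset.mem_filter] at hc
        obtain ⟨hcR, p, hpA, hpI⟩ := hc
        rw [hA, Finset.mem_product, Finset.mem_filter, Finset.mem_filter] at hpA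
        rw [Finset.mem_image]
        refine ⟨p, ?_, ?_⟩
        · rw [Finset.mem_filter, Finset.mem_product]
          exact ⟨⟨hpA.1.1, hpA.2.1⟩, hpI⟩
        · rw [hpA.1.2, hpA.2.2]
      calc (R.filter fun c => ∃ p ∈ A c, Inc p l).card
          ≤ (((T ×ˢ T).filter fun p => p.1 * l.1 - p.2 * l.2 = x).image
              (fun p => (rk T p.1 / m, rk T p.2 / m))).card := Finset.card_le_card hsub
        _ ≤ 2 * r := cells_per_line T hm x l.1 l.2 hx
    calc ∑ l ∈ T ×ˢ T, (R.filter fun c => ∃ p ∈ A c, Inc p l).card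
        ≤ ∑ _l ∈ T ×ˢ T, 2 * r := Finset.sum_le_sum hline
      _ = n ^ 2 * (2 * r) := by
          rw [Finset.sum_const, Finset.card_product, smul_eq_mul]; ring
      _ = 2 * r * n ^ 2 := by ring
  -- Step 5: put it together over ℝ
  have hcast : (S4.card : ℝ) = ∑ c ∈ R, ((S4.filter fun q => key q = c).card : ℝ) := by
    rw [step1]; push_cast; rfl
  rw [hcast]
  have hRcard : (R.card : ℕ) = r * r := by rw [hR, Finset.card_product, Finset.card_range]
  have hsum_split : ∑ c ∈ R, ((S4.filter fun q => key q = c).card : ℝ)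
      ≤ (m : ℝ) ^ 2 * (∑ c ∈ R, Real.sqrt ((B c).card)) + ∑ c ∈ R, ((B c).card : ℝ) := by
    calc ∑ c ∈ R, ((S4.filter fun q => key q = c).card : ℝ)
        ≤ ∑ c ∈ R, ((m : ℝ) ^ 2 * Real.sqrt ((B c).card) + ((B c).card : ℝ)) :=
          Finset.sum_le_sum step3
      _ = (m : ℝ) ^ 2 * (∑ c ∈ R, Real.sqrt ((B c).card)) + ∑ c ∈ R, ((B c).card : ℝ) := by
          rw [Finset.sum_add_distrib, Finset.mul_sum]
  have hBsum : (∑ c ∈ R, ((B c).card : ℝ)) ≤ 2 * (r : ℝ) * (n : ℝ) ^ 2 := by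
    have := step4
    calc (∑ c ∈ R, ((B c).card : ℝ)) = ((∑ c ∈ R, (B c).card : ℕ) : ℝ) := by push_cast; rfl
      _ ≤ ((2 * r * n ^ 2 : ℕ) : ℝ) := by exact_mod_cast this
      _ = 2 * (r : ℝ) * (n : ℝ) ^ 2 := by push_cast; ring
  have hsqrt_sum : (∑ c ∈ R, Real.sqrt ((B c).card))
      ≤ (r : ℝ) * (n : ℝ) * Real.sqrt (2 * (r : ℝ)) := by
    have hCS := Finset.sum_mul_sq_le_sq_mul_sq R (fun _ => (1:ℝ))
      (fun c => Real.sqrt ((B c).card))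
    simp only [one_mul, one_pow] at hCS
    have hsq : ∀ c ∈ R, Real.sqrt (((B c).card : ℝ)) ^ 2 = ((B c).card : ℝ) := by
      intro c _
      exact Real.sq_sqrt (by positivity)
    have hCS2 : (∑ c ∈ R, Real.sqrt ((B c).card)) ^ 2
        ≤ (R.card : ℝ) * ∑ c ∈ R, ((B c).card : ℝ) := by
      calc (∑ c ∈ R, Real.sqrt ((B c).card)) ^ 2
          ≤ (∑ _c ∈ R, (1:ℝ)) * ∑ c ∈ R, Real.sqrt (((B c).card : ℝ)) ^ 2 := hCS
        _ = (R.card : ℝ) * ∑ c ∈ R, ((B c).card : ℝ) := by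
            rw [Finset.sum_const, Finset.sum_congr rfl hsq]; simp
    have hrhs : (R.card : ℝ) * (∑ c ∈ R, ((B c).card : ℝ))
        ≤ ((r : ℝ) * (n : ℝ) * Real.sqrt (2 * (r : ℝ))) ^ 2 := by
      have h1 : (R.card : ℝ) = (r : ℝ) * r := by exact_mod_cast hRcard
      have h2 : Real.sqrt (2 * (r : ℝ)) ^ 2 = 2 * (r : ℝ) := Real.sq_sqrt (by positivity)
      calc (R.card : ℝ) * (∑ c ∈ R, ((B c).card : ℝ))
          ≤ (R.card : ℝ) * (2 * (r : ℝ) * (n : ℝ) ^ 2) := by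
            apply mul_le_mul_of_nonneg_left hBsum (by positivity)
        _ = ((r : ℝ) * (n : ℝ)) ^ 2 * (2 * (r : ℝ)) := by rw [h1]; ring
        _ = ((r : ℝ) * (n : ℝ) * Real.sqrt (2 * (r : ℝ))) ^ 2 := by
            conv_rhs => rw [mul_pow]
            rw [h2]
    have hsum_nonneg : (0:ℝ) ≤ ∑ c ∈ R, Real.sqrt ((B c).card) :=
      Finset.sum_nonneg fun c _ => Real.sqrt_nonneg _
    have htarget_nonneg : (0:ℝ) ≤ (r : ℝ) * (n : ℝ) * Real.sqrt (2 * (r : ℝ)) := by positivity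
    nlinarith [hCS2.trans hrhs]
  calc ∑ c ∈ R, ((S4.filter fun q => key q = c).card : ℝ)
      ≤ (m : ℝ) ^ 2 * (∑ c ∈ R, Real.sqrt ((B c).card)) + ∑ c ∈ R, ((B c).card : ℝ) :=
        hsum_split
    _ ≤ (m : ℝ) ^ 2 * ((r : ℝ) * (n : ℝ) * Real.sqrt (2 * (r : ℝ)))
        + 2 * (r : ℝ) * (n : ℝ) ^ 2 := by
        have h1 := hsqrt_sum
        have h2 := hBsum
        have h3 : (0:ℝ) ≤ (m : ℝ) ^ 2 := by positivity
        nlinarith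
    _ = (m : ℝ) ^ 2 * ((r : ℕ) : ℝ) * (n : ℝ) * Real.sqrt (2 * (((r : ℕ)) : ℝ))
        + 2 * ((r : ℕ) : ℝ) * (n : ℝ) ^ 2 := by ring

/-- Numeric form: for `x ≠ 0` the level set has at most `20 n^{8/3}` points. -/
lemma S4_final (T : Finset ℝ) (hT : 1 ≤ T.card) {x : ℝ} (hx : x ≠ 0) :
    (((T ×ˢ T ×ˢ T ×ˢ T).filter
        fun q => q.1 * q.2.1 - q.2.2.1 * q.2.2.2 = x).card : ℝ)
      ≤ 20 * (T.card : ℝ) ^ ((8:ℝ)/3) := by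
  set N : ℝ := (T.card : ℝ) with hNdef
  have hN1 : (1:ℝ) ≤ N := by rw [hNdef]; exact_mod_cast hT
  have hN0 : (0:ℝ) < N := lt_of_lt_of_le one_pos hN1
  have h13 : (1:ℝ) ≤ N ^ ((1:ℝ)/3) := by
    calc (1:ℝ) = (1:ℝ) ^ ((1:ℝ)/3) := (Real.one_rpow _).symm
      _ ≤ N ^ ((1:ℝ)/3) := Real.rpow_le_rpow zero_le_one hN1 (by norm_num)
  have h23 : (1:ℝ) ≤ N ^ ((2:ℝ)/3) := by
    calc (1:ℝ) = (1:ℝ) ^ ((2:ℝ)/3) := (Real.one_rpow _).symm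
      _ ≤ N ^ ((2:ℝ)/3) := Real.rpow_le_rpow zero_le_one hN1 (by norm_num)
  have h13pos : (0:ℝ) < N ^ ((1:ℝ)/3) := lt_of_lt_of_le one_pos h13
  set m : ℕ := ⌈N ^ ((1:ℝ)/3)⌉₊ with hmdef
  have hm : 0 < m := Nat.ceil_pos.2 h13pos
  have hm_low : N ^ ((1:ℝ)/3) ≤ (m : ℝ) := Nat.le_ceil _
  have hm_up : (m : ℝ) ≤ 2 * N ^ ((1:ℝ)/3) := by
    have := Nat.ceil_lt_add_one (le_of_lt h13pos)
    calc (m:ℝ) ≤ N ^ ((1:ℝ)/3) + 1 := le_of_lt this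
      _ ≤ 2 * N ^ ((1:ℝ)/3) := by linarith
  set r : ℕ := (T.card - 1) / m + 1 with hrdef
  have hr_up : (r : ℝ) ≤ 2 * N ^ ((2:ℝ)/3) := by
    have hcast : ((T.card - 1) / m : ℕ) ≤ ((T.card - 1 : ℕ) : ℝ) / (m : ℝ) :=
      Nat.cast_div_le
    have hsub : ((T.card - 1 : ℕ) : ℝ) ≤ N := by
      rw [hNdef]
      exact_mod_cast Nat.sub_le _ _
    have hdiv : ((T.card - 1 : ℕ) : ℝ) / (m : ℝ) ≤ N / N ^ ((1:ℝ)/3) := by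
      apply div_le_div₀ hN0.le hsub h13pos hm_low
    have hNdiv : N / N ^ ((1:ℝ)/3) = N ^ ((2:ℝ)/3) := by
      have hone : N / N ^ ((1:ℝ)/3) = N ^ (1:ℝ) / N ^ ((1:ℝ)/3) := by
        rw [Real.rpow_one]
      rw [hone, ← Real.rpow_sub hN0]
      norm_num
    have : (r : ℝ) = ((T.card - 1) / m : ℕ) + 1 := by rw [hrdef]; push_cast; ring
    rw [this]
    calc (((T.card - 1) / m : ℕ) : ℝ) + 1 ≤ N / N ^ ((1:ℝ)/3) + 1 := by
          linarith [hcast.trans hdiv]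
      _ = N ^ ((2:ℝ)/3) + 1 := by rw [hNdiv]
      _ ≤ 2 * N ^ ((2:ℝ)/3) := by linarith
  have hr_pos : (0:ℝ) ≤ (r : ℝ) := by positivity
  have hsqrt : Real.sqrt (2 * (r : ℝ)) ≤ 2 * N ^ ((1:ℝ)/3) := by
    have h1 : 2 * (r : ℝ) ≤ 4 * N ^ ((2:ℝ)/3) := by linarith
    calc Real.sqrt (2 * (r : ℝ)) ≤ Real.sqrt (4 * N ^ ((2:ℝ)/3)) := Real.sqrt_le_sqrt h1
      _ = 2 * N ^ ((1:ℝ)/3) := by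
          rw [Real.sqrt_mul (by norm_num : (0:ℝ) ≤ 4)]
          rw [show (4:ℝ) = 2^2 by norm_num, Real.sqrt_sq (by norm_num : (0:ℝ) ≤ 2)]
          congr 1
          rw [Real.sqrt_eq_rpow, ← Real.rpow_mul hN0.le]
          norm_num
  have hmain := S4_bound T hm hx
  rw [← hrdef, ← hNdef] at hmain
  have hm2 : (m:ℝ)^2 ≤ 4 * N ^ ((2:ℝ)/3) := by
    have h0 : (0:ℝ) ≤ (m:ℝ) := by positivity
    calc (m:ℝ)^2 ≤ (2 * N ^ ((1:ℝ)/3))^2 := by nlinarith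
      _ = 4 * (N ^ ((1:ℝ)/3) * N ^ ((1:ℝ)/3)) := by ring
      _ = 4 * N ^ ((2:ℝ)/3) := by
          rw [← Real.rpow_add hN0]; norm_num
  have hsqrt0 : (0:ℝ) ≤ Real.sqrt (2 * (r : ℝ)) := Real.sqrt_nonneg _
  -- combine all bounds
  have hterm1 : (m : ℝ) ^ 2 * (r : ℝ) * N * Real.sqrt (2 * (r : ℝ))
      ≤ 16 * N ^ ((8:ℝ)/3) := by
    have step : (m : ℝ) ^ 2 * (r : ℝ) * N * Real.sqrt (2 * (r : ℝ))
        ≤ (4 * N ^ ((2:ℝ)/3)) * (2 * N ^ ((2:ℝ)/3)) * N * (2 * N ^ ((1:ℝ)/3)) := by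
      have p1 : (0:ℝ) ≤ (m:ℝ)^2 := by positivity
      have p2 : (0:ℝ) ≤ N := hN0.le
      have p4 : (0:ℝ) ≤ 4 * N ^ ((2:ℝ)/3) := by positivity
      have p5 : (0:ℝ) ≤ 2 * N ^ ((2:ℝ)/3) := by positivity
      have p6 : (0:ℝ) ≤ 2 * N ^ ((1:ℝ)/3) := by positivity
      apply mul_le_mul
      · apply mul_le_mul
        · exact mul_le_mul hm2 hr_up hr_pos p4
        · exact le_refl N
        · exact p2
        · positivity
      · exact hsqrt
      · exact hsqrt0
      · positivity
    calc (m : ℝ) ^ 2 * (r : ℝ) * N * Real.sqrt (2 * (r : ℝ))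
        ≤ (4 * N ^ ((2:ℝ)/3)) * (2 * N ^ ((2:ℝ)/3)) * N * (2 * N ^ ((1:ℝ)/3)) := step
      _ = 16 * (N ^ ((2:ℝ)/3) * N ^ ((2:ℝ)/3) * N ^ (1:ℝ) * N ^ ((1:ℝ)/3)) := by
          rw [Real.rpow_one]; ring
      _ = 16 * N ^ ((8:ℝ)/3) := by
          rw [← Real.rpow_add hN0, ← Real.rpow_add hN0, ← Real.rpow_add hN0]
          norm_num
  have hterm2 : 2 * (r : ℝ) * N ^ 2 ≤ 4 * N ^ ((8:ℝ)/3) := by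
    calc 2 * (r : ℝ) * N ^ 2 ≤ 2 * (2 * N ^ ((2:ℝ)/3)) * N ^ 2 := by nlinarith [sq_nonneg N]
      _ = 4 * (N ^ ((2:ℝ)/3) * N ^ (2:ℝ)) := by
          rw [← Real.rpow_natCast N 2]; push_cast; ring
      _ = 4 * N ^ ((8:ℝ)/3) := by
          rw [← Real.rpow_add hN0]; norm_num
  calc (((T ×ˢ T ×ˢ T ×ˢ T).filter
        fun q => q.1 * q.2.1 - q.2.2.1 * q.2.2.2 = x).card : ℝ)
      ≤ (m : ℝ) ^ 2 * (r : ℝ) * N * Real.sqrt (2 * (r : ℝ)) + 2 * (r : ℝ) * N ^ 2 := hmain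
    _ ≤ 16 * N ^ ((8:ℝ)/3) + 4 * N ^ ((8:ℝ)/3) := add_le_add hterm1 hterm2
    _ = 20 * N ^ ((8:ℝ)/3) := by ring

/-- Pairs with zero product. -/
lemma pairs_zero (T : Finset ℝ) :
    ((T ×ˢ T).filter fun p => p.1 * p.2 = 0).card ≤ 2 * T.card := by
  have hsub : ((T ×ˢ T).filter fun p => p.1 * p.2 = 0)
      ⊆ (T.filter (fun t => t = 0)) ×ˢ T ∪ T ×ˢ (T.filter (fun t => t = 0)) := by
    intro p hp
    rw [Finset.mem_filter, Finset.mem_product] at hp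
    rcases mul_eq_zero.1 hp.2 with h | h
    · exact Finset.mem_union_left _ (Finset.mem_product.2
        ⟨Finset.mem_filter.2 ⟨hp.1.1, h⟩, hp.1.2⟩)
    · exact Finset.mem_union_right _ (Finset.mem_product.2
        ⟨hp.1.1, Finset.mem_filter.2 ⟨hp.1.2, h⟩⟩)
  have hz : (T.filter (fun t => t = 0)).card ≤ 1 := by
    apply Finset.card_le_one.2
    intro a ha b hb
    rw [Finset.mem_filter] at ha hb
    rw [ha.2, hb.2]
  calc ((T ×ˢ T).filter fun p => p.1 * p.2 = 0).card
      ≤ ((T.filter (fun t => t = 0)) ×ˢ T ∪ T ×ˢ (T.filter (fun t => t = 0))).card :=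
        Finset.card_le_card hsub
    _ ≤ ((T.filter (fun t => t = 0)) ×ˢ T).card + (T ×ˢ (T.filter (fun t => t = 0))).card :=
        Finset.card_union_le _ _
    _ ≤ 1 * T.card + T.card * 1 := by
        rw [Finset.card_product, Finset.card_product]
        exact Nat.add_le_add (Nat.mul_le_mul_right _ hz) (Nat.mul_le_mul_left _ hz)
    _ = 2 * T.card := by ring

/-- The zero level set. -/
lemma S4_zero (T : Finset ℝ) :
    (((T ×ˢ T ×ˢ T ×ˢ T).filter
        fun q => q.1 * q.2.1 - q.2.2.1 * q.2.2.2 = 0).card : ℝ)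
      ≤ 3 * (T.card : ℝ) ^ 3 := by
  set S := (T ×ˢ T ×ˢ T ×ˢ T).filter
      (fun q : ℝ × ℝ × ℝ × ℝ => q.1 * q.2.1 - q.2.2.1 * q.2.2.2 = 0) with hS
  have hmem : ∀ q ∈ S, q.1 ∈ T ∧ q.2.1 ∈ T ∧ q.2.2.1 ∈ T ∧ q.2.2.2 ∈ T
      ∧ q.1 * q.2.1 = q.2.2.1 * q.2.2.2 := by
    intro q hq
    rw [hS, Finset.mem_filter, Finset.mem_product, Finset.mem_product,
      Finset.mem_product] at hq
    exact ⟨hq.1.1, hq.1.2.1, hq.1.2.2.1, hq.1.2.2.2, by linarith [hq.2]⟩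
  have hsplit := Finset.card_filter_add_card_filter_not
    (s := S) (p := fun q => q.2.2.1 = 0)
  have h1 : (S.filter fun q => q.2.2.1 = 0).card ≤ 2 * T.card * T.card := by
    have hinj : (S.filter fun q => q.2.2.1 = 0).card
        ≤ ((((T ×ˢ T).filter fun p => p.1 * p.2 = 0)) ×ˢ T).card := by
      apply Finset.card_le_card_of_injOn (fun q => ((q.1, q.2.1), q.2.2.2))
      · intro q hq
        rw [Finset.mem_coe, Finset.mem_filter] at hq
        obtain ⟨c1, c2, c3, c4, c5⟩ := hmem q hq.1
        rw [Finset.mem_coe, Finset.mem_product, Finset.mem_filter, Finset.mem_product]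
        refine ⟨⟨⟨c1, c2⟩, ?_⟩, c4⟩
        dsimp only
        rw [c5, hq.2, zero_mul]
      · intro q hq q' hq' heq
        simp only [Finset.coe_filter, Set.mem_setOf_eq] at hq hq'
        have e1 : q.1 = q'.1 := (Prod.ext_iff.1 (Prod.ext_iff.1 heq).1).1
        have e2 : q.2.1 = q'.2.1 := (Prod.ext_iff.1 (Prod.ext_iff.1 heq).1).2
        have e4 : q.2.2.2 = q'.2.2.2 := (Prod.ext_iff.1 heq).2
        have e3 : q.2.2.1 = q'.2.2.1 := by rw [hq.2, hq'.2]
        ext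
        · exact e1
        · exact e2
        · exact e3
        · exact e4
    calc (S.filter fun q => q.2.2.1 = 0).card
        ≤ ((((T ×ˢ T).filter fun p => p.1 * p.2 = 0)) ×ˢ T).card := hinj
      _ = (((T ×ˢ T).filter fun p => p.1 * p.2 = 0)).card * T.card :=
          Finset.card_product _ _
      _ ≤ (2 * T.card) * T.card := Nat.mul_le_mul_right _ (pairs_zero T)
      _ = 2 * T.card * T.card := rfl
  have h2 : (S.filter fun q => ¬q.2.2.1 = 0).card ≤ T.card * (T.card * T.card) := by
    have hinj2 : (S.filter fun q => ¬q.2.2.1 = 0).card ≤ (T ×ˢ T ×ˢ T).card := by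
      apply Finset.card_le_card_of_injOn (fun q => (q.1, q.2.1, q.2.2.1))
      · intro q hq
        rw [Finset.mem_coe, Finset.mem_filter] at hq
        obtain ⟨c1, c2, c3, c4, _⟩ := hmem q hq.1
        rw [Finset.mem_coe, Finset.mem_product, Finset.mem_product]
        exact ⟨c1, c2, c3⟩
      · intro q hq q' hq' heq
        simp only [Finset.coe_filter, Set.mem_setOf_eq] at hq hq'
        obtain ⟨_, _, _, _, c5⟩ := hmem q hq.1
        obtain ⟨_, _, _, _, c5'⟩ := hmem q' hq'.1
        have e1 : q.1 = q'.1 := (Prod.ext_iff.1 heq).1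
        have e2 : q.2.1 = q'.2.1 := (Prod.ext_iff.1 (Prod.ext_iff.1 heq).2).1
        have e3 : q.2.2.1 = q'.2.2.1 := (Prod.ext_iff.1 (Prod.ext_iff.1 heq).2).2
        have e4 : q.2.2.2 = q'.2.2.2 := by
          have hne : q.2.2.1 ≠ 0 := hq.2
          have : q.2.2.1 * q.2.2.2 = q.2.2.1 * q'.2.2.2 := by
            rw [← c5, e1, e2, c5', e3]
          exact mul_left_cancel₀ hne this
        ext
        · exact e1
        · exact e2
        · exact e3
        · exact e4
    calc (S.filter fun q => ¬q.2.2.1 = 0).card ≤ (T ×ˢ T ×ˢ T).card := hinj2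
      _ = T.card * (T.card * T.card) := by
          rw [Finset.card_product, Finset.card_product]

  have htot : S.card ≤ 2 * T.card * T.card + T.card * (T.card * T.card) := by omega
  have hcast : (S.card : ℝ) ≤ 2 * (T.card:ℝ) * T.card + (T.card:ℝ) * ((T.card:ℝ) * T.card) := by
    exact_mod_cast htot
  have hle : 2 * (T.card:ℝ) * T.card ≤ 2 * (T.card:ℝ)^3 := by
    have h0 : (0:ℝ) ≤ (T.card : ℝ) := by positivity
    rcases Nat.eq_zero_or_pos T.card with h | h
    · rw [h]; norm_num
    · have h1 : (1:ℝ) ≤ (T.card : ℝ) := by exact_mod_cast h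
      nlinarith
  calc (S.card : ℝ) ≤ 2 * (T.card:ℝ) * T.card + (T.card:ℝ) * ((T.card:ℝ) * T.card) := hcast
    _ ≤ 2 * (T.card:ℝ)^3 + (T.card:ℝ)^3 := by
        refine add_le_add hle (le_of_eq (by ring))
    _ = 3 * (T.card : ℝ) ^ 3 := by ring

theorem stmt_13 :
    ∃ C : ℝ, 0 < C ∧
      ∀ T : Finset ℝ,
        ((((T ×ˢ T ×ˢ T ×ˢ T ×ˢ T ×ˢ T).filter
            fun t => t.1 * t.2.1 = t.2.2.1 * t.2.2.2.1 - t.2.2.2.2.1 * t.2.2.2.2.2).card : ℝ)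
          ≤ C * (T.card : ℝ) ^ ((14 : ℝ) / 3)) := by
  refine ⟨26, by norm_num, ?_⟩
  intro T
  rcases Nat.eq_zero_or_pos T.card with h0 | hpos
  · have hT : T = ∅ := Finset.card_eq_zero.1 h0
    subst hT
    have hz : ((0:ℝ) : ℝ) ^ ((14 : ℝ) / 3) = 0 := Real.zero_rpow (by norm_num)
    simp only [Finset.product_empty, Finset.empty_product, Finset.filter_empty,
      Finset.card_empty, Nat.cast_zero]
    rw [hz]
    norm_num
  · have hT1 : 1 ≤ T.card := hpos
    have hN1 : (1:ℝ) ≤ (T.card : ℝ) := by exact_mod_cast hT1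
    have hN0 : (0:ℝ) < (T.card : ℝ) := lt_of_lt_of_le one_pos hN1
    set big := (T ×ˢ T ×ˢ T ×ˢ T ×ˢ T ×ˢ T).filter
        (fun t : ℝ × ℝ × ℝ × ℝ × ℝ × ℝ =>
          t.1 * t.2.1 = t.2.2.1 * t.2.2.2.1 - t.2.2.2.2.1 * t.2.2.2.2.2) with hbig
    have hmem6 : ∀ t ∈ big, t.1 ∈ T ∧ t.2.1 ∈ T ∧ t.2.2.1 ∈ T ∧ t.2.2.2.1 ∈ T
        ∧ t.2.2.2.2.1 ∈ T ∧ t.2.2.2.2.2 ∈ T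
        ∧ t.1 * t.2.1 = t.2.2.1 * t.2.2.2.1 - t.2.2.2.2.1 * t.2.2.2.2.2 := by
      intro t ht
      rw [hbig, Finset.mem_filter, Finset.mem_product, Finset.mem_product,
        Finset.mem_product, Finset.mem_product, Finset.mem_product] at ht
      exact ⟨ht.1.1, ht.1.2.1, ht.1.2.2.1, ht.1.2.2.2.1, ht.1.2.2.2.2.1,
        ht.1.2.2.2.2.2, ht.2⟩
    have hfib1 : big.card = ∑ p ∈ T ×ˢ T,
        (big.filter fun t => (t.1, t.2.1) = p).card := by
      apply Finset.card_eq_sum_card_fiberwise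
      intro t ht
      obtain ⟨h1, h2, _⟩ := hmem6 t ht
      exact Finset.mem_product.2 ⟨h1, h2⟩
    have hfib2 : ∀ p ∈ T ×ˢ T, (big.filter fun t => (t.1, t.2.1) = p).card
        = ((T ×ˢ T ×ˢ T ×ˢ T).filter
            fun q => q.1 * q.2.1 - q.2.2.1 * q.2.2.2 = p.1 * p.2).card := by
      intro p hp
      rw [Finset.mem_product] at hp
      apply Finset.card_bij (fun t _ => t.2.2)
      · intro t ht
        rw [Finset.mem_filter] at ht
        obtain ⟨_, _, h3, h4, h5, h6, heq⟩ := hmem6 t ht.1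
        have e1 : t.1 = p.1 := (Prod.ext_iff.1 ht.2).1
        have e2 : t.2.1 = p.2 := (Prod.ext_iff.1 ht.2).2
        rw [Finset.mem_filter, Finset.mem_product, Finset.mem_product,
          Finset.mem_product]
        refine ⟨⟨h3, h4, h5, h6⟩, ?_⟩
        rw [← e1, ← e2]
        linarith [heq]
      · intro t ht t' ht' heq
        rw [Finset.mem_filter] at ht ht'
        have e1 : t.1 = p.1 := (Prod.ext_iff.1 ht.2).1
        have e2 : t.2.1 = p.2 := (Prod.ext_iff.1 ht.2).2
        have e1' : t'.1 = p.1 := (Prod.ext_iff.1 ht'.2).1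
        have e2' : t'.2.1 = p.2 := (Prod.ext_iff.1 ht'.2).2
        have : t.2.2 = t'.2.2 := heq
        ext
        · rw [e1, e1']
        · rw [e2, e2']
        · rw [this]
        · rw [this]
        · rw [this]
        · rw [this]
      · intro q hq
        rw [Finset.mem_filter, Finset.mem_product, Finset.mem_product,
          Finset.mem_product] at hq
        refine ⟨(p.1, (p.2, q)), ?_, rfl⟩
        rw [Finset.mem_filter]
        constructor
        · rw [hbig, Finset.mem_filter, Finset.mem_product, Finset.mem_product,
            Finset.mem_product, Finset.mem_product, Finset.mem_product]
          refine ⟨⟨hp.1, hp.2, hq.1.1, hq.1.2.1, hq.1.2.2.1, hq.1.2.2.2⟩, ?_⟩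
          dsimp only
          linarith [hq.2]
        · rfl
    have hcast : (big.card : ℝ) = ∑ p ∈ T ×ˢ T,
        (((T ×ˢ T ×ˢ T ×ˢ T).filter
            fun q => q.1 * q.2.1 - q.2.2.1 * q.2.2.2 = p.1 * p.2).card : ℝ) := by
      rw [hfib1, Finset.sum_congr rfl hfib2]
      push_cast
      rfl
    rw [hcast]
    rw [← Finset.sum_filter_add_sum_filter_not (T ×ˢ T) (fun p => p.1 * p.2 = 0)]
    have hzero_bound : ∑ p ∈ (T ×ˢ T).filter (fun p => p.1 * p.2 = 0),
        (((T ×ˢ T ×ˢ T ×ˢ T).filter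
            fun q => q.1 * q.2.1 - q.2.2.1 * q.2.2.2 = p.1 * p.2).card : ℝ)
        ≤ 6 * (T.card : ℝ) ^ 4 := by
      have hterm : ∀ p ∈ (T ×ˢ T).filter (fun p => p.1 * p.2 = 0),
          (((T ×ˢ T ×ˢ T ×ˢ T).filter
              fun q => q.1 * q.2.1 - q.2.2.1 * q.2.2.2 = p.1 * p.2).card : ℝ)
            ≤ 3 * (T.card : ℝ) ^ 3 := by
        intro p hp
        rw [Finset.mem_filter] at hp
        rw [hp.2]
        exact S4_zero T
      calc ∑ p ∈ (T ×ˢ T).filter (fun p => p.1 * p.2 = 0),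
          (((T ×ˢ T ×ˢ T ×ˢ T).filter
              fun q => q.1 * q.2.1 - q.2.2.1 * q.2.2.2 = p.1 * p.2).card : ℝ)
          ≤ ∑ _p ∈ (T ×ˢ T).filter (fun p => p.1 * p.2 = 0), 3 * (T.card : ℝ) ^ 3 :=
            Finset.sum_le_sum hterm
        _ = (((T ×ˢ T).filter (fun p => p.1 * p.2 = 0)).card : ℝ) * (3 * (T.card : ℝ) ^ 3) := by
            rw [Finset.sum_const, nsmul_eq_mul]
        _ ≤ (2 * (T.card : ℝ)) * (3 * (T.card : ℝ) ^ 3) := by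
            have := pairs_zero T
            have hc : (((T ×ˢ T).filter (fun p => p.1 * p.2 = 0)).card : ℝ)
                ≤ 2 * (T.card : ℝ) := by exact_mod_cast this
            have h3 : (0:ℝ) ≤ 3 * (T.card : ℝ) ^ 3 := by positivity
            exact mul_le_mul_of_nonneg_right hc h3
        _ = 6 * (T.card : ℝ) ^ 4 := by ring
    have hnz_bound : ∑ p ∈ (T ×ˢ T).filter (fun p => ¬p.1 * p.2 = 0),
        (((T ×ˢ T ×ˢ T ×ˢ T).filter
            fun q => q.1 * q.2.1 - q.2.2.1 * q.2.2.2 = p.1 * p.2).card : ℝ)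
        ≤ (T.card : ℝ) ^ 2 * (20 * (T.card : ℝ) ^ ((8:ℝ)/3)) := by
      have hterm : ∀ p ∈ (T ×ˢ T).filter (fun p => ¬p.1 * p.2 = 0),
          (((T ×ˢ T ×ˢ T ×ˢ T).filter
              fun q => q.1 * q.2.1 - q.2.2.1 * q.2.2.2 = p.1 * p.2).card : ℝ)
            ≤ 20 * (T.card : ℝ) ^ ((8:ℝ)/3) := by
        intro p hp
        rw [Finset.mem_filter] at hp
        exact S4_final T hT1 hp.2
      calc ∑ p ∈ (T ×ˢ T).filter (fun p => ¬p.1 * p.2 = 0),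
          (((T ×ˢ T ×ˢ T ×ˢ T).filter
              fun q => q.1 * q.2.1 - q.2.2.1 * q.2.2.2 = p.1 * p.2).card : ℝ)
          ≤ ∑ _p ∈ (T ×ˢ T).filter (fun p => ¬p.1 * p.2 = 0),
              20 * (T.card : ℝ) ^ ((8:ℝ)/3) := Finset.sum_le_sum hterm
        _ = ((((T ×ˢ T).filter (fun p => ¬p.1 * p.2 = 0)).card : ℝ))
              * (20 * (T.card : ℝ) ^ ((8:ℝ)/3)) := by
            rw [Finset.sum_const, nsmul_eq_mul]
        _ ≤ (T.card : ℝ) ^ 2 * (20 * (T.card : ℝ) ^ ((8:ℝ)/3)) := by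
            have hc : (((T ×ˢ T).filter (fun p => ¬p.1 * p.2 = 0)).card : ℝ)
                ≤ (T.card : ℝ) ^ 2 := by
              have h1 : ((T ×ˢ T).filter (fun p => ¬p.1 * p.2 = 0)).card
                  ≤ (T ×ˢ T).card := Finset.card_le_card (Finset.filter_subset _ _)
              have h2 : (T ×ˢ T).card = T.card * T.card := Finset.card_product _ _
              have : ((T ×ˢ T).filter (fun p => ¬p.1 * p.2 = 0)).card
                  ≤ T.card * T.card := h2 ▸ h1
              calc (((T ×ˢ T).filter (fun p => ¬p.1 * p.2 = 0)).card : ℝ)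
                  ≤ ((T.card * T.card : ℕ) : ℝ) := by exact_mod_cast this
                _ = (T.card : ℝ) ^ 2 := by push_cast; ring
            have h3 : (0:ℝ) ≤ 20 * (T.card : ℝ) ^ ((8:ℝ)/3) := by positivity
            exact mul_le_mul_of_nonneg_right hc h3
    have hpow1 : (T.card : ℝ) ^ 2 * (20 * (T.card : ℝ) ^ ((8:ℝ)/3))
        = 20 * (T.card : ℝ) ^ ((14:ℝ)/3) := by
      have h2 : (T.card : ℝ) ^ 2 = (T.card : ℝ) ^ ((2:ℝ)) := by
        rw [← Real.rpow_natCast (T.card : ℝ) 2]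
        norm_num
      calc (T.card : ℝ) ^ 2 * (20 * (T.card : ℝ) ^ ((8:ℝ)/3))
          = 20 * ((T.card : ℝ) ^ ((2:ℝ)) * (T.card : ℝ) ^ ((8:ℝ)/3)) := by rw [h2]; ring
        _ = 20 * (T.card : ℝ) ^ ((14:ℝ)/3) := by
            rw [← Real.rpow_add hN0]
            norm_num
    have hpow2 : 6 * (T.card : ℝ) ^ 4 ≤ 6 * (T.card : ℝ) ^ ((14:ℝ)/3) := by
      have h4 : (T.card : ℝ) ^ 4 = (T.card : ℝ) ^ ((4:ℝ)) := by
        rw [← Real.rpow_natCast (T.card : ℝ) 4]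
        norm_num
      rw [h4]
      have := Real.rpow_le_rpow_of_exponent_le hN1
        (by norm_num : (4:ℝ) ≤ (14:ℝ)/3)
      linarith
    calc ∑ p ∈ (T ×ˢ T).filter (fun p => p.1 * p.2 = 0),
          (((T ×ˢ T ×ˢ T ×ˢ T).filter
              fun q => q.1 * q.2.1 - q.2.2.1 * q.2.2.2 = p.1 * p.2).card : ℝ)
        + ∑ p ∈ (T ×ˢ T).filter (fun p => ¬p.1 * p.2 = 0),
          (((T ×ˢ T ×ˢ T ×ˢ T).filter
              fun q => q.1 * q.2.1 - q.2.2.1 * q.2.2.2 = p.1 * p.2).card : ℝ)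
        ≤ 6 * (T.card : ℝ) ^ 4 + (T.card : ℝ) ^ 2 * (20 * (T.card : ℝ) ^ ((8:ℝ)/3)) :=
          add_le_add hzero_bound hnz_bound
      _ ≤ 6 * (T.card : ℝ) ^ ((14:ℝ)/3) + 20 * (T.card : ℝ) ^ ((14:ℝ)/3) := by
          rw [hpow1]
          linarith [hpow2]
      _ = 26 * (T.card : ℝ) ^ ((14:ℝ)/3) := by ring
end

section
/- Let K > 0 and suppose that for every finite set P ⊆ ℝ² \ {0} the number of quadruples (q,q',r,r') ∈ P⁴ with ω(q,q') = ω(r,r') ≠ 0 is at most K·|P|³. Then there exists a constant C depending only on K such that for every finite set A ⊆ ℝ \ {0}, the additive energy satisfies E(A) ≤ C·|AA|³/|A|. -/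
open Finset
open scoped Pointwise Classical

/-- The standard non-degenerate skew-symmetric bilinear form on `ℝ²`. -/
noncomputable def omegaForm (q q' : ℝ × ℝ) : ℝ := q.1 * q'.2 - q.2 * q'.1

/-- The number of quadruples `(q,q',r,r') ∈ P⁴` with `ω(q,q') = ω(r,r') ≠ 0`. -/
noncomputable def omegaEnergy (P : Finset (ℝ × ℝ)) : ℕ :=
  ((P ×ˢ P ×ˢ P ×ˢ P).filter fun x =>
      omegaForm x.1 x.2.1 = omegaForm x.2.2.1 x.2.2.2 ∧
      omegaForm x.1 x.2.1 ≠ 0).card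

private lemma omega_pair (x y u v : ℝ) (hu : u ≠ 0) (hv : v ≠ 0) :
    omegaForm (x * u, v⁻¹) (-(y * v), u⁻¹) = x + y := by
  unfold omegaForm; field_simp; ring

theorem stmt_16 (K : ℝ) (hK : 0 < K)
    (hyp : ∀ P : Finset (ℝ × ℝ), (∀ p ∈ P, p ≠ (0 : ℝ × ℝ)) →
      ((omegaEnergy P : ℝ) ≤ K * (P.card : ℝ) ^ 3)) :
    ∃ C : ℝ, 0 < C ∧
      ∀ A : Finset ℝ, (0 : ℝ) ∉ A →
        ((((A ×ˢ A ×ˢ A ×ˢ A).filter fun x =>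
            x.1 + x.2.1 = x.2.2.1 + x.2.2.2).card : ℝ)
          ≤ C * ((A * A).card : ℝ) ^ 3 / (A.card : ℝ)) := by
  refine ⟨8 * K + 1, by positivity, ?_⟩
  intro A hA0
  rcases A.eq_empty_or_nonempty with rfl | hAne
  · simp
  have hz : ∀ a ∈ A, a ≠ (0 : ℝ) := fun a ha h => hA0 (h ▸ ha)
  obtain ⟨a₀, ha₀⟩ := hAne
  have hnpos : 0 < A.card := card_pos.mpr ⟨a₀, ha₀⟩
  -- the point set
  set D : Finset ℝ := A * A with hD
  set Q : Finset (ℝ × ℝ) := (D ∪ -D) ×ˢ A⁻¹ with hQ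
  have hQne : ∀ p ∈ Q, p ≠ (0 : ℝ × ℝ) := by
    intro p hp h0
    rw [hQ, mem_product] at hp
    obtain ⟨b, hb, hbe⟩ := mem_inv.mp hp.2
    have h2 : p.2 ≠ 0 := by rw [← hbe]; exact inv_ne_zero (hz b hb)
    rw [h0] at h2; exact h2 rfl
  -- cardinality of Q
  have hQcard : Q.card ≤ 2 * D.card * A.card := by
    rw [hQ, card_product]
    have h1 : (D ∪ -D).card ≤ 2 * D.card := by
      calc (D ∪ -D).card ≤ D.card + (-D).card := card_union_le _ _
        _ = 2 * D.card := by rw [card_neg]; ring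
    have h2 : (A⁻¹).card = A.card := by
      rw [inv_def]; exact card_image_of_injective _ inv_injective
    rw [h2]
    exact Nat.mul_le_mul_right _ h1
  -- |A| ≤ |D|
  have hAD : A.card ≤ D.card := by
    apply card_le_card_of_injOn (fun a => a * a₀)
    · intro a ha; exact mul_mem_mul ha ha₀
    · intro a _ a' _ h
      exact mul_right_cancel₀ (hz a₀ ha₀) h
  -- the additive-energy set and its split into zero-sum / nonzero-sum quadruples
  set F : Finset (ℝ × ℝ × ℝ × ℝ) := (A ×ˢ A ×ˢ A ×ˢ A).filter
    (fun x => x.1 + x.2.1 = x.2.2.1 + x.2.2.2) with hF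
  set Z : Finset (ℝ × ℝ × ℝ × ℝ) := F.filter (fun x => x.1 + x.2.1 = 0) with hZ
  set T : Finset (ℝ × ℝ × ℝ × ℝ) := F.filter (fun x => ¬ x.1 + x.2.1 = 0) with hT
  have hsplit : Z.card + T.card = F.card := by
    rw [hZ, hT]
    exact card_filter_add_card_filter_not _
  -- bound the zero-sum part
  have hZcard : Z.card ≤ A.card * A.card := by
    have h : Z.card ≤ (A ×ˢ A).card := by
      apply card_le_card_of_injOn (fun x => (x.1, x.2.2.1))
      · intro x hx
        obtain ⟨hxF, -⟩ := mem_filter.mp hx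
        obtain ⟨hxg, -⟩ := mem_filter.mp hxF
        simp only [mem_product] at hxg
        exact mem_product.mpr ⟨hxg.1, hxg.2.2.1⟩
      · intro x hx y hy hxy
        obtain ⟨hxF, hx0⟩ := mem_filter.mp hx
        obtain ⟨-, hxe⟩ := mem_filter.mp hxF
        obtain ⟨hyF, hy0⟩ := mem_filter.mp hy
        obtain ⟨-, hye⟩ := mem_filter.mp hyF
        simp only [Prod.mk.injEq] at hxy
        obtain ⟨h1, h3⟩ := hxy
        obtain ⟨x1, x2, x3, x4⟩ := x
        obtain ⟨y1, y2, y3, y4⟩ := y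
        simp only at h1 h3 hxe hye hx0 hy0 ⊢
        subst h1; subst h3
        have h2 : x2 = y2 := by linarith
        have h4 : x4 = y4 := by linarith
        simp [h2, h4]
    simpa [card_product] using h
  -- the key injection: T × A⁴ ↪ ω-energy quadruples of Q
  have hmain : (T ×ˢ ((A ×ˢ A) ×ˢ (A ×ˢ A))).card ≤ omegaEnergy Q := by
    rw [omegaEnergy]
    apply card_le_card_of_injOn (fun z =>
      ((z.1.1 * z.2.1.1, z.2.1.2⁻¹),
       ((-(z.1.2.1 * z.2.1.2), z.2.1.1⁻¹),
        ((z.1.2.2.1 * z.2.2.1, z.2.2.2⁻¹),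
         (-(z.1.2.2.2 * z.2.2.2), z.2.2.1⁻¹)))))
    · rintro ⟨⟨a1, a2, a3, a4⟩, ⟨⟨a, b⟩, ⟨c, d⟩⟩⟩ hmem
      simp only [mem_coe, mem_product] at hmem
      obtain ⟨hTm, ⟨⟨ha, hb⟩, ⟨hc, hd⟩⟩⟩ := hmem
      obtain ⟨hFm, hne⟩ := mem_filter.mp hTm
      obtain ⟨hg, heq⟩ := mem_filter.mp hFm
      simp only [mem_product] at hg
      obtain ⟨h1, h2, h3, h4⟩ := hg
      simp only at heq hne h1 h2 h3 h4
      have hQmem : ∀ (u v : ℝ), u ∈ D ∪ -D → v ∈ A⁻¹ → ((u, v) : ℝ × ℝ) ∈ Q := by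
        intro u v hu hv
        rw [hQ]
        exact mem_product.mpr ⟨hu, hv⟩
      refine mem_filter.mpr ⟨?_, ?_, ?_⟩
      · simp only [mem_product]
        refine ⟨?_, ?_, ?_, ?_⟩
        · exact hQmem _ _ (mem_union_left _ (mul_mem_mul h1 ha)) (inv_mem_inv hb)
        · exact hQmem _ _ (mem_union_right _ (neg_mem_neg (mul_mem_mul h2 hb)))
            (inv_mem_inv ha)
        · exact hQmem _ _ (mem_union_left _ (mul_mem_mul h3 hc)) (inv_mem_inv hd)
        · exact hQmem _ _ (mem_union_right _ (neg_mem_neg (mul_mem_mul h4 hd)))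
            (inv_mem_inv hc)
      · show omegaForm (a1 * a, b⁻¹) (-(a2 * b), a⁻¹)
          = omegaForm (a3 * c, d⁻¹) (-(a4 * d), c⁻¹)
        rw [omega_pair a1 a2 a b (hz a ha) (hz b hb),
          omega_pair a3 a4 c d (hz c hc) (hz d hd)]
        exact heq
      · show omegaForm (a1 * a, b⁻¹) (-(a2 * b), a⁻¹) ≠ 0
        rw [omega_pair a1 a2 a b (hz a ha) (hz b hb)]
        exact hne
    · rintro ⟨⟨a1, a2, a3, a4⟩, ⟨⟨a, b⟩, ⟨c, d⟩⟩⟩ hmem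
        ⟨⟨a1', a2', a3', a4'⟩, ⟨⟨a', b'⟩, ⟨c', d'⟩⟩⟩ hmem' hE
      simp only [Finset.coe_product, Set.mem_prod, mem_coe, mem_product] at hmem hmem'
      obtain ⟨hTm, ⟨⟨ha, hb⟩, ⟨hc, hd⟩⟩⟩ := hmem
      obtain ⟨hTm', ⟨⟨ha', hb'⟩, ⟨hc', hd'⟩⟩⟩ := hmem'
      simp only [Prod.mk.injEq] at hE
      obtain ⟨⟨e1, e2⟩, ⟨e3, e4⟩, ⟨e5, e6⟩, ⟨e7, e8⟩⟩ := hE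
      have hbb : b = b' := inv_injective e2
      have haa : a = a' := inv_injective e4
      have hdd : d = d' := inv_injective e6
      have hcc : c = c' := inv_injective e8
      subst hbb; subst haa; subst hdd; subst hcc
      have h1 : a1 = a1' := mul_right_cancel₀ (hz a ha) e1
      have h2 : a2 = a2' := mul_right_cancel₀ (hz b hb) (neg_injective e3)
      have h3 : a3 = a3' := mul_right_cancel₀ (hz c hc) e5
      have h4 : a4 = a4' := mul_right_cancel₀ (hz d hd) (neg_injective e7)
      simp [h1, h2, h3, h4]
  -- cardinality of the source of the injection
  have hScard : (T ×ˢ ((A ×ˢ A) ×ˢ (A ×ˢ A))).card = T.card * A.card ^ 4 := by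
    simp only [card_product]
    ring
  -- now the numerics, over ℝ
  have hnR : (0 : ℝ) < (A.card : ℝ) := by exact_mod_cast hnpos
  have hyp1 : (omegaEnergy Q : ℝ) ≤ K * (Q.card : ℝ) ^ 3 := hyp Q hQne
  have hQcR : (Q.card : ℝ) ≤ 2 * (D.card : ℝ) * (A.card : ℝ) := by exact_mod_cast hQcard
  have hQQ : (Q.card : ℝ) ^ 3 ≤ (2 * (D.card : ℝ) * (A.card : ℝ)) ^ 3 := by
    apply pow_le_pow_left₀ (by positivity) hQcR
  have hTbound : (T.card : ℝ) * (A.card : ℝ) ^ 4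
      ≤ 8 * K * (D.card : ℝ) ^ 3 * (A.card : ℝ) ^ 3 := by
    have h1n : T.card * A.card ^ 4 ≤ omegaEnergy Q := hScard ▸ hmain
    have h1 : (T.card : ℝ) * (A.card : ℝ) ^ 4 ≤ (omegaEnergy Q : ℝ) := by
      exact_mod_cast h1n
    calc (T.card : ℝ) * (A.card : ℝ) ^ 4 ≤ (omegaEnergy Q : ℝ) := h1
      _ ≤ K * (Q.card : ℝ) ^ 3 := hyp1
      _ ≤ K * (2 * (D.card : ℝ) * (A.card : ℝ)) ^ 3 := by
          exact mul_le_mul_of_nonneg_left hQQ (le_of_lt hK)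
      _ = 8 * K * (D.card : ℝ) ^ 3 * (A.card : ℝ) ^ 3 := by ring
  -- T.card * n ≤ 8 K dc³
  have hTn : (T.card : ℝ) * (A.card : ℝ) ≤ 8 * K * (D.card : ℝ) ^ 3 := by
    have h3 : (0 : ℝ) < (A.card : ℝ) ^ 3 := by positivity
    have := hTbound
    have h4 : ((T.card : ℝ) * (A.card : ℝ)) * (A.card : ℝ) ^ 3
        ≤ (8 * K * (D.card : ℝ) ^ 3) * (A.card : ℝ) ^ 3 := by
      calc ((T.card : ℝ) * (A.card : ℝ)) * (A.card : ℝ) ^ 3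
          = (T.card : ℝ) * (A.card : ℝ) ^ 4 := by ring
        _ ≤ 8 * K * (D.card : ℝ) ^ 3 * (A.card : ℝ) ^ 3 := hTbound
        _ = (8 * K * (D.card : ℝ) ^ 3) * (A.card : ℝ) ^ 3 := by ring
    exact le_of_mul_le_mul_right h4 h3
  -- Z.card * n ≤ dc³
  have hZn : (Z.card : ℝ) * (A.card : ℝ) ≤ (D.card : ℝ) ^ 3 := by
    have h1 : (Z.card : ℝ) ≤ (A.card : ℝ) * (A.card : ℝ) := by exact_mod_cast hZcard
    have h2 : (A.card : ℝ) ≤ (D.card : ℝ) := by exact_mod_cast hAD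
    calc (Z.card : ℝ) * (A.card : ℝ) ≤ ((A.card : ℝ) * (A.card : ℝ)) * (A.card : ℝ) := by
          exact mul_le_mul_of_nonneg_right h1 (le_of_lt hnR)
      _ = (A.card : ℝ) ^ 3 := by ring
      _ ≤ (D.card : ℝ) ^ 3 := by
          exact pow_le_pow_left₀ (le_of_lt hnR) h2 3
  -- conclude
  rw [le_div_iff₀ hnR]
  have hFe : (F.card : ℝ) = (Z.card : ℝ) + (T.card : ℝ) := by exact_mod_cast hsplit.symm
  calc (F.card : ℝ) * (A.card : ℝ)
      = (Z.card : ℝ) * (A.card : ℝ) + (T.card : ℝ) * (A.card : ℝ) := by rw [hFe]; ring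
    _ ≤ (D.card : ℝ) ^ 3 + 8 * K * (D.card : ℝ) ^ 3 := by linarith
    _ = (8 * K + 1) * (D.card : ℝ) ^ 3 := by ring
end
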